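/- arXiv:2405.02341 — 5 statements merged into one kernel-verified Lean document; each statement's English description precedes it below -/
import Mathlib

section
/- Let σ > 0, γ ∈ [0,1], κ ∈ ℝ, and let α ≥ 2 be an integer. Then the Rényi divergence of order α between the mixture γ·N(κ, σ²) + (1−γ)·N(0, σ²) and N(0, σ²) satisfies the exact identity D_α( γ·N(κ,σ²) + (1−γ)·N(0,σ²) ‖ N(0,σ²) ) = (1/(α−1)) · log( Σ_{ℓ=0}^{α} C(α,ℓ) · (1−γ)^{α−ℓ} · γ^ℓ · exp( ℓ(ℓ−1)·κ² / (2σ²) ) ), where C(α,ℓ) is the binomial coefficient. -/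
open MeasureTheory ProbabilityTheory Real
open scoped ENNReal NNReal Classical

/-- Rényi divergence of order `a` between measures `μ` and `ν`:
`(a-1)⁻¹ * log ∫ (dμ/dν)^a dν`, set to `⊤` when `μ` is not absolutely
continuous with respect to `ν`. -/
noncomputable def renyiDiv {E : Type*} [MeasurableSpace E] (a : ℝ) (μ ν : Measure E) : EReal :=
  if μ ≪ ν then (((a - 1)⁻¹ : ℝ) : EReal) * ENNReal.log (∫⁻ x, (μ.rnDeriv ν x) ^ a ∂ν)
  else ⊤

lemma lintegral_exp_gaussian0 (σ t : ℝ) (hσ : 0 < σ) :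
    ∫⁻ x, ENNReal.ofReal (rexp (t * x)) ∂(gaussianReal 0 (Real.toNNReal (σ ^ 2))) =
      ENNReal.ofReal (rexp (t ^ 2 * σ ^ 2 / 2)) := by
  have hσ2 : (0:ℝ) < σ ^ 2 := by positivity
  have hv : Real.toNNReal (σ ^ 2) ≠ 0 := by
    simp [Real.toNNReal_eq_zero, not_le, hσ2, hσ.ne']
  have hvr : ((Real.toNNReal (σ ^ 2) : ℝ≥0) : ℝ) = σ ^ 2 := Real.coe_toNNReal _ hσ2.le
  have hm : Measurable fun x : ℝ => ENNReal.ofReal (rexp (t * x)) := by fun_prop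
  rw [gaussianReal_of_var_ne_zero _ hv,
    lintegral_withDensity_eq_lintegral_mul _ (measurable_gaussianPDF _ _) hm]
  have key : ∀ x : ℝ, gaussianPDF 0 (Real.toNNReal (σ ^ 2)) x * ENNReal.ofReal (rexp (t * x))
      = ENNReal.ofReal (rexp (t ^ 2 * σ ^ 2 / 2)) * gaussianPDF (t * σ ^ 2) (Real.toNNReal (σ ^ 2)) x := by
    intro x
    rw [gaussianPDF, gaussianPDF, ← ENNReal.ofReal_mul (gaussianPDFReal_nonneg _ _ _),
      ← ENNReal.ofReal_mul (Real.exp_pos _).le]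
    congr 1
    simp only [gaussianPDFReal, hvr]
    rw [mul_assoc, ← Real.exp_add, mul_comm (rexp (t ^ 2 * σ ^ 2 / 2)), mul_assoc,
      mul_assoc, ← Real.exp_add]
    congr 2
    field_simp
    ring
  calc ∫⁻ x, (gaussianPDF 0 (Real.toNNReal (σ ^ 2)) * fun x => ENNReal.ofReal (rexp (t * x))) x
      = ∫⁻ x, ENNReal.ofReal (rexp (t ^ 2 * σ ^ 2 / 2)) * gaussianPDF (t * σ ^ 2) (Real.toNNReal (σ ^ 2)) x := by
        exact lintegral_congr fun x => key x
    _ = ENNReal.ofReal (rexp (t ^ 2 * σ ^ 2 / 2)) := by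
        rw [lintegral_const_mul _ (measurable_gaussianPDF _ _), lintegral_gaussianPDF_eq_one _ hv, mul_one]

theorem renyi_div_sparsified_gaussian_one_dim
    (σ γ κ : ℝ) (hσ : 0 < σ) (hγ0 : 0 ≤ γ) (hγ1 : γ ≤ 1)
    (α : ℕ) (hα : 2 ≤ α) :
    renyiDiv (α : ℝ)
      (ENNReal.ofReal γ • gaussianReal κ (Real.toNNReal (σ ^ 2)) +
        ENNReal.ofReal (1 - γ) • gaussianReal 0 (Real.toNNReal (σ ^ 2)))
      (gaussianReal 0 (Real.toNNReal (σ ^ 2))) =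
    ((((α : ℝ) - 1)⁻¹ * Real.log (∑ ℓ ∈ Finset.range (α + 1),
        (α.choose ℓ : ℝ) * (1 - γ) ^ (α - ℓ) * γ ^ ℓ *
          Real.exp ((ℓ : ℝ) * ((ℓ : ℝ) - 1) * κ ^ 2 / (2 * σ ^ 2))) : ℝ) : EReal) := by
  have hσ2 : (0:ℝ) < σ ^ 2 := by positivity
  have hσ2' : σ ^ 2 ≠ 0 := hσ2.ne'
  have hv : Real.toNNReal (σ ^ 2) ≠ 0 := by
    simp [Real.toNNReal_eq_zero, not_le, hσ2, hσ.ne']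
  have hvr : ((Real.toNNReal (σ ^ 2) : ℝ≥0) : ℝ) = σ ^ 2 := Real.coe_toNNReal _ hσ2.le
  set v := Real.toNNReal (σ ^ 2)
  set ν := gaussianReal 0 v with hν
  set μ := ENNReal.ofReal γ • gaussianReal κ v + ENNReal.ofReal (1 - γ) • gaussianReal 0 v with hμ
  set e : ℝ → ℝ := fun x => rexp (κ / σ ^ 2 * x - κ ^ 2 / (2 * σ ^ 2)) with he
  set g : ℝ → ℝ := fun x => γ * e x + (1 - γ) with hg
  have hγ1' : (0:ℝ) ≤ 1 - γ := by linarith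
  have hgpos : ∀ x, 0 < g x := by
    intro x
    have hex := Real.exp_pos (κ / σ ^ 2 * x - κ ^ 2 / (2 * σ ^ 2))
    rcases lt_or_eq_of_le hγ1 with h | h
    · have : 0 ≤ γ * e x := mul_nonneg hγ0 hex.le
      simp only [hg]
      linarith
    · simp only [hg, h, sub_self, add_zero, one_mul]
      exact hex
  have hf : Measurable fun x => ENNReal.ofReal (g x) := by
    simp only [hg, he]; fun_prop
  -- μ = ν.withDensity f
  have hμν : μ = ν.withDensity fun x => ENNReal.ofReal (g x) := by
    rw [hμ, hν, gaussianReal_of_var_ne_zero κ hv, gaussianReal_of_var_ne_zero 0 hv,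
      ← withDensity_smul _ (measurable_gaussianPDF _ _),
      ← withDensity_smul _ (measurable_gaussianPDF _ _),
      ← withDensity_add_left ((measurable_gaussianPDF _ _).const_smul _),
      ← withDensity_mul _ (measurable_gaussianPDF _ _) hf]
    congr 1
    funext x
    simp only [Pi.add_apply, Pi.smul_apply, Pi.mul_apply, smul_eq_mul, gaussianPDF]
    rw [← ENNReal.ofReal_mul hγ0, ← ENNReal.ofReal_mul hγ1',
      ← ENNReal.ofReal_add (mul_nonneg hγ0 (gaussianPDFReal_nonneg _ _ _))
        (mul_nonneg hγ1' (gaussianPDFReal_nonneg _ _ _)),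
      ← ENNReal.ofReal_mul (gaussianPDFReal_nonneg _ _ _)]
    congr 1
    have hkey : gaussianPDFReal κ v x = gaussianPDFReal 0 v x * e x := by
      simp only [gaussianPDFReal, hvr, he, mul_assoc, ← Real.exp_add]
      congr 2
      field_simp
      ring
    rw [hkey, hg]
    ring
  have habs : μ ≪ ν := hμν ▸ withDensity_absolutelyContinuous _ _
  have hrn : μ.rnDeriv ν =ᵐ[ν] fun x => ENNReal.ofReal (g x) := by
    rw [hμν]; exact Measure.rnDeriv_withDensity ν hf
  -- the sum
  set S : ℝ := ∑ ℓ ∈ Finset.range (α + 1),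
      (α.choose ℓ : ℝ) * (1 - γ) ^ (α - ℓ) * γ ^ ℓ *
        Real.exp ((ℓ : ℝ) * ((ℓ : ℝ) - 1) * κ ^ 2 / (2 * σ ^ 2)) with hS
  have hSpos : 0 < S := by
    rw [hS]
    apply Finset.sum_pos'
    · intro i _
      have : (0:ℝ) ≤ (α.choose i : ℝ) := Nat.cast_nonneg _
      positivity
    · rcases lt_or_eq_of_le hγ1 with h | h
      · refine ⟨0, Finset.mem_range.mpr (Nat.succ_pos _), ?_⟩
        simp only [Nat.choose_zero_right, Nat.cast_one, one_mul, pow_zero, mul_one,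
          Nat.sub_zero, Nat.cast_zero]
        have h1γ : (0:ℝ) < 1 - γ := by linarith
        positivity
      · refine ⟨α, Finset.self_mem_range_succ α, ?_⟩
        rw [h]
        simp only [Nat.choose_self, Nat.cast_one, one_mul, Nat.sub_self, pow_zero, one_pow]
        positivity
  -- the integral
  set c : ℕ → ℝ := fun ℓ => (α.choose ℓ : ℝ) * (1 - γ) ^ (α - ℓ) * γ ^ ℓ *
      rexp (-(ℓ:ℝ) * κ ^ 2 / (2 * σ ^ 2)) with hc
  have hcnn : ∀ ℓ, 0 ≤ c ℓ := by
    intro ℓ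
    have : (0:ℝ) ≤ (α.choose ℓ : ℝ) := Nat.cast_nonneg _
    rw [hc]; positivity
  have hgpow : ∀ x, g x ^ α = ∑ ℓ ∈ Finset.range (α + 1),
      c ℓ * rexp ((ℓ:ℝ) * κ / σ ^ 2 * x) := by
    intro x
    rw [hg]
    rw [add_pow]
    refine Finset.sum_congr rfl fun ℓ hℓ => ?_
    rw [mul_pow, he]
    rw [← Real.exp_nat_mul]
    rw [hc, mul_assoc ((α.choose ℓ : ℝ) * (1 - γ) ^ (α - ℓ) * γ ^ ℓ), ← Real.exp_add]
    rw [show -(ℓ:ℝ) * κ ^ 2 / (2 * σ ^ 2) + (ℓ:ℝ) * κ / σ ^ 2 * x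
        = (ℓ:ℝ) * (κ / σ ^ 2 * x - κ ^ 2 / (2 * σ ^ 2)) from by field_simp; ring]
    ring
  have hint : ∫⁻ x, (μ.rnDeriv ν x) ^ (α : ℝ) ∂ν = ENNReal.ofReal S := by
    have h1 : ∫⁻ x, (μ.rnDeriv ν x) ^ (α : ℝ) ∂ν
        = ∫⁻ x, (ENNReal.ofReal (g x)) ^ (α : ℝ) ∂ν :=
      lintegral_congr_ae (hrn.mono fun x hx => by dsimp only; rw [hx])
    rw [h1]
    have h2 : ∀ x : ℝ, (ENNReal.ofReal (g x)) ^ (α : ℝ)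
        = ∑ ℓ ∈ Finset.range (α + 1), ENNReal.ofReal (c ℓ * rexp ((ℓ:ℝ) * κ / σ ^ 2 * x)) := by
      intro x
      rw [ENNReal.ofReal_rpow_of_pos (hgpos x), Real.rpow_natCast, hgpow x,
        ENNReal.ofReal_sum_of_nonneg]
      intro i _
      exact mul_nonneg (hcnn i) (Real.exp_pos _).le
    rw [lintegral_congr h2, lintegral_finset_sum _ (fun ℓ _ => by fun_prop)]
    have h3 : ∀ ℓ ∈ Finset.range (α + 1),
        ∫⁻ x, ENNReal.ofReal (c ℓ * rexp ((ℓ:ℝ) * κ / σ ^ 2 * x)) ∂ν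
        = ENNReal.ofReal ((α.choose ℓ : ℝ) * (1 - γ) ^ (α - ℓ) * γ ^ ℓ *
            Real.exp ((ℓ : ℝ) * ((ℓ : ℝ) - 1) * κ ^ 2 / (2 * σ ^ 2))) := by
      intro ℓ _
      have : ∀ x : ℝ, ENNReal.ofReal (c ℓ * rexp ((ℓ:ℝ) * κ / σ ^ 2 * x))
          = ENNReal.ofReal (c ℓ) * ENNReal.ofReal (rexp ((ℓ:ℝ) * κ / σ ^ 2 * x)) := fun x =>
        ENNReal.ofReal_mul (hcnn ℓ)
      rw [lintegral_congr this, lintegral_const_mul _ (by fun_prop), hν,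
        lintegral_exp_gaussian0 σ _ hσ, ← ENNReal.ofReal_mul (hcnn ℓ), hc, mul_assoc
          ((α.choose ℓ : ℝ) * (1 - γ) ^ (α - ℓ) * γ ^ ℓ), ← Real.exp_add]
      congr 2
      field_simp
      ring
    rw [Finset.sum_congr rfl h3, ← ENNReal.ofReal_sum_of_nonneg, hS]
    intro i _
    have : (0:ℝ) ≤ (α.choose i : ℝ) := Nat.cast_nonneg _
    positivity
  rw [renyiDiv, if_pos habs, hint, ENNReal.log_ofReal_of_pos hSpos, ← EReal.coe_mul]
end

section
/- Fix an integer α ≥ 2, γ ∈ [0,1], σ > 0, and 0 < Δ_∞ ≤ Δ_2, and define F(u) = log( Σ_{ℓ=0}^{α} C(α,ℓ) · (1−γ)^{α−ℓ} · γ^ℓ · exp( ℓ(ℓ−1)·u / (2σ²) ) ). Then for every vector κ ∈ ℝ^d with ‖κ‖_2 ≤ Δ_2 and ‖κ‖_∞ ≤ Δ_∞, it holds that Σ_{j=1}^d F(κ_j²) ≤ (Δ_2² / Δ_∞²) · F(Δ_∞²). -/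
open scoped BigOperators

lemma key_log_profile (s : Finset ℕ) (p c : ℕ → ℝ)
    (hp : ∀ i ∈ s, 0 ≤ p i) (hp1 : ∑ i ∈ s, p i = 1)
    (hc : ∀ i ∈ s, 0 ≤ c i) (u t : ℝ) (hu : 0 ≤ u) (hut : u ≤ t) (ht : 0 < t) :
    Real.log (∑ i ∈ s, p i * Real.exp (c i * u)) ≤
      (u / t) * Real.log (∑ i ∈ s, p i * Real.exp (c i * t)) := by
  have hS1 : (1 : ℝ) ≤ ∑ i ∈ s, p i * Real.exp (c i * t) := by
    rw [← hp1]
    refine Finset.sum_le_sum fun i hi => ?_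
    nth_rewrite 1 [← mul_one (p i)]
    exact mul_le_mul_of_nonneg_left
      (by simpa using Real.exp_le_exp.2 (mul_nonneg (hc i hi) ht.le)) (hp i hi)
  have hSpos : 0 < ∑ i ∈ s, p i * Real.exp (c i * t) := lt_of_lt_of_le one_pos hS1
  rcases eq_or_lt_of_le hu with h0 | hu0
  · have : ∑ i ∈ s, p i * Real.exp (c i * u) = 1 := by
      rw [← h0]; simpa using hp1
    rw [this, ← h0]
    simp
  · have hq : (1 : ℝ) ≤ t / u := (one_le_div hu0).2 hut
    have hmain : ∑ i ∈ s, p i * Real.exp (c i * u) ≤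
        (∑ i ∈ s, p i * Real.exp (c i * t)) ^ (u / t) := by
      have heq : ∀ i ∈ s, p i * Real.exp (c i * u) =
          p i * (Real.exp (c i * t)) ^ (u / t) := by
        intro i hi
        rw [← Real.exp_mul]
        congr 1
        field_simp
      rw [Finset.sum_congr rfl heq]
      have := Real.arith_mean_le_rpow_mean s p (fun i => (Real.exp (c i * t)) ^ (u / t))
        hp hp1 (fun i _ => Real.rpow_nonneg (Real.exp_pos _).le _) hq
      have hz : ∀ i ∈ s, ((Real.exp (c i * t)) ^ (u / t)) ^ (t / u) = Real.exp (c i * t) := by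
        intro i hi
        rw [← Real.rpow_mul (Real.exp_pos _).le]
        rw [show u / t * (t / u) = 1 by field_simp]
        simp
      calc ∑ i ∈ s, p i * Real.exp (c i * t) ^ (u / t)
          ≤ (∑ i ∈ s, p i * (Real.exp (c i * t) ^ (u / t)) ^ (t / u)) ^ (1 / (t / u)) := this
        _ = (∑ i ∈ s, p i * Real.exp (c i * t)) ^ (u / t) := by
            rw [Finset.sum_congr rfl (fun i hi => by rw [hz i hi]),
              show 1 / (t / u) = u / t by field_simp]
    have hLpos : 0 < ∑ i ∈ s, p i * Real.exp (c i * u) := by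
      have : (1 : ℝ) ≤ ∑ i ∈ s, p i * Real.exp (c i * u) := by
        rw [← hp1]
        refine Finset.sum_le_sum fun i hi => ?_
        nth_rewrite 1 [← mul_one (p i)]
        exact mul_le_mul_of_nonneg_left
          (by simpa using Real.exp_le_exp.2 (mul_nonneg (hc i hi) hu)) (hp i hi)
      linarith
    calc Real.log (∑ i ∈ s, p i * Real.exp (c i * u))
        ≤ Real.log ((∑ i ∈ s, p i * Real.exp (c i * t)) ^ (u / t)) :=
          Real.log_le_log hLpos hmain
      _ = (u / t) * Real.log (∑ i ∈ s, p i * Real.exp (c i * t)) :=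
          Real.log_rpow hSpos _

theorem sum_logSumExp_profile_le
    (α : ℕ) (hα : 2 ≤ α) (γ σ Δ₂ Δinf : ℝ)
    (hγ0 : 0 ≤ γ) (hγ1 : γ ≤ 1) (hσ : 0 < σ)
    (hΔinf : 0 < Δinf) (hΔ : Δinf ≤ Δ₂)
    (F : ℝ → ℝ)
    (hF : ∀ u, F u = Real.log (∑ ℓ ∈ Finset.range (α + 1),
      (α.choose ℓ : ℝ) * (1 - γ) ^ (α - ℓ) * γ ^ ℓ *
        Real.exp ((ℓ : ℝ) * ((ℓ : ℝ) - 1) * u / (2 * σ ^ 2))))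
    (d : ℕ) (κ : Fin d → ℝ)
    (hκ2 : Real.sqrt (∑ j, κ j ^ 2) ≤ Δ₂)
    (hκinf : ∀ j, |κ j| ≤ Δinf) :
    ∑ j, F (κ j ^ 2) ≤ (Δ₂ ^ 2 / Δinf ^ 2) * F (Δinf ^ 2) := by
  set p : ℕ → ℝ := fun ℓ => (α.choose ℓ : ℝ) * (1 - γ) ^ (α - ℓ) * γ ^ ℓ with hp_def
  set c : ℕ → ℝ := fun ℓ => (ℓ : ℝ) * ((ℓ : ℝ) - 1) / (2 * σ ^ 2) with hc_def
  have hF' : ∀ u, F u = Real.log (∑ ℓ ∈ Finset.range (α + 1), p ℓ * Real.exp (c ℓ * u)) := by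
    intro u
    rw [hF u]
    congr 1
    refine Finset.sum_congr rfl fun ℓ _ => ?_
    congr 1
    rw [hc_def]
    ring_nf
  have hp_nonneg : ∀ i ∈ Finset.range (α + 1), 0 ≤ p i := by
    intro i _
    exact mul_nonneg (mul_nonneg (Nat.cast_nonneg _) (pow_nonneg (by linarith) _))
      (pow_nonneg hγ0 _)
  have hp_sum : ∑ i ∈ Finset.range (α + 1), p i = 1 := by
    have h := add_pow γ (1 - γ) α
    simp only [add_sub_cancel, one_pow] at h
    refine Eq.trans ?_ h.symm
    refine Finset.sum_congr rfl fun ℓ _ => ?_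
    rw [hp_def]; ring
  have hc_nonneg : ∀ i ∈ Finset.range (α + 1), 0 ≤ c i := by
    intro i _
    rcases Nat.eq_zero_or_pos i with h | h
    · simp [hc_def, h]
    · apply div_nonneg
      · apply mul_nonneg (Nat.cast_nonneg _)
        have : (1 : ℝ) ≤ (i : ℝ) := by exact_mod_cast h
        linarith
      · positivity
  have hFt0 : 0 ≤ F (Δinf ^ 2) := by
    rw [hF' _]
    apply Real.log_nonneg
    rw [← hp_sum]
    refine Finset.sum_le_sum fun i hi => ?_
    nth_rewrite 1 [← mul_one (p i)]
    exact mul_le_mul_of_nonneg_left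
      (by simpa using Real.exp_le_exp.2 (mul_nonneg (hc_nonneg i hi) (by positivity)))
      (hp_nonneg i hi)
  have hsum_sq : ∑ j, κ j ^ 2 ≤ Δ₂ ^ 2 := by
    have h0 : 0 ≤ ∑ j, κ j ^ 2 := Finset.sum_nonneg fun j _ => sq_nonneg _
    have := pow_le_pow_left₀ (Real.sqrt_nonneg _) hκ2 2
    rwa [Real.sq_sqrt h0] at this
  have hstep : ∀ j, F (κ j ^ 2) ≤ (κ j ^ 2 / Δinf ^ 2) * F (Δinf ^ 2) := by
    intro j
    rw [hF' (κ j ^ 2), hF' (Δinf ^ 2)]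
    exact key_log_profile _ p c hp_nonneg hp_sum hc_nonneg _ _ (sq_nonneg _)
      (by
        have := pow_le_pow_left₀ (abs_nonneg (κ j)) (hκinf j) 2
        rwa [sq_abs] at this)
      (by positivity)
  calc ∑ j, F (κ j ^ 2) ≤ ∑ j, (κ j ^ 2 / Δinf ^ 2) * F (Δinf ^ 2) :=
        Finset.sum_le_sum fun j _ => hstep j
    _ = (∑ j, κ j ^ 2) / Δinf ^ 2 * F (Δinf ^ 2) := by
        rw [← Finset.sum_mul, ← Finset.sum_div]
    _ ≤ (Δ₂ ^ 2 / Δinf ^ 2) * F (Δinf ^ 2) := by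
        apply mul_le_mul_of_nonneg_right _ hFt0
        exact div_le_div_of_nonneg_right hsum_sq (by positivity)
end

section
/- Let σ > 0, γ ∈ [0,1], 0 < Δ_∞ ≤ Δ_2, and let α ≥ 2 be an integer. Let g ∈ ℝ^d satisfy ‖g‖_2 ≤ Δ_2 and ‖g‖_∞ ≤ Δ_∞. Then the Rényi divergence of order α between the product measure ⊗_{j=1}^d ( γ·N(g_j, σ²) + (1−γ)·N(0, σ²) ) and the product measure ⊗_{j=1}^d N(0, σ²) is at most ( (Δ_2²/Δ_∞²) / (α−1) ) · log( Σ_{ℓ=0}^{α} C(α,ℓ) · (1−γ)^{α−ℓ} · γ^ℓ · exp( ℓ(ℓ−1)·Δ_∞² / (2σ²) ) ). -/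
open MeasureTheory ProbabilityTheory Real
open scoped ENNReal NNReal Classical

/-- Bernoulli(γ) distribution on ℝ, supported on {0, 1}. -/
noncomputable def bern (γ : ℝ) : Measure ℝ :=
  ENNReal.ofReal γ • Measure.dirac 1 + ENNReal.ofReal (1 - γ) • Measure.dirac 0



lemma lintegral_pi_prod' {n : ℕ} {E : Type*} [MeasurableSpace E]
    (μ : Fin n → Measure E) [∀ i, SigmaFinite (μ i)]
    (f : Fin n → E → ℝ≥0∞) (hf : ∀ i, Measurable (f i)) :
    ∫⁻ x : Fin n → E, ∏ i, f i (x i) ∂Measure.pi μ = ∏ i, ∫⁻ x, f i x ∂(μ i) := by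
  induction n with
  | zero => simp [Measure.pi_of_empty]
  | succ n ih =>
    rw [← ((measurePreserving_piFinSuccAbove (fun i : Fin (n+1) => μ i) 0).symm).lintegral_comp_emb
      (MeasurableEquiv.measurableEmbedding _)]
    simp_rw [MeasurableEquiv.piFinSuccAbove_symm_apply, Fin.insertNthEquiv,
      Fin.prod_univ_succ, Fin.insertNth_zero]
    simp only [Fin.zero_succAbove, Equiv.coe_fn_mk, Fin.cons_zero, Fin.cons_succ, cast_eq]
    rw [lintegral_prod_mul (f := f 0) (g := fun y : Fin n → E => ∏ i, f i.succ (y i))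
      (hf 0).aemeasurable
      (Finset.measurable_prod Finset.univ fun i _ =>
        (hf i.succ).comp (measurable_pi_apply i)).aemeasurable]
    rw [ih (fun i => μ i.succ) (fun i => f i.succ) (fun i => hf i.succ)]

lemma pdf_shift {σ : ℝ} (hσ : 0 < σ) (m x : ℝ) :
    gaussianPDFReal 0 (Real.toNNReal (σ ^ 2)) x * Real.exp ((m * x - m ^ 2 / 2) / σ ^ 2)
      = gaussianPDFReal m (Real.toNNReal (σ ^ 2)) x := by
  have hc : ((Real.toNNReal (σ ^ 2) : ℝ≥0) : ℝ) = σ ^ 2 := Real.coe_toNNReal _ (sq_nonneg σ)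
  have hσ2 : (σ : ℝ) ^ 2 ≠ 0 := by positivity
  unfold gaussianPDFReal
  rw [hc, mul_assoc, ← Real.exp_add]
  congr 1
  field_simp
  ring

lemma phi_meas (σ γ m : ℝ) :
    Measurable (fun x : ℝ => ENNReal.ofReal (γ * rexp ((m * x - m ^ 2 / 2) / σ ^ 2) + (1 - γ))) := by
  fun_prop

lemma mixture_eq {σ γ : ℝ} (hσ : 0 < σ) (hγ0 : 0 ≤ γ) (hγ1 : γ ≤ 1) (m : ℝ) :
    ENNReal.ofReal γ • gaussianReal m (Real.toNNReal (σ ^ 2)) +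
        ENNReal.ofReal (1 - γ) • gaussianReal 0 (Real.toNNReal (σ ^ 2))
      = (gaussianReal 0 (Real.toNNReal (σ ^ 2))).withDensity
          (fun x => ENNReal.ofReal (γ * rexp ((m * x - m ^ 2 / 2) / σ ^ 2) + (1 - γ))) := by
  have hv : Real.toNNReal (σ ^ 2) ≠ 0 := by
    simp only [ne_eq, Real.toNNReal_eq_zero, not_le]; positivity
  rw [gaussianReal_of_var_ne_zero 0 hv, gaussianReal_of_var_ne_zero m hv, ← withDensity_mul _ (measurable_gaussianPDF _ _) (phi_meas σ γ m)]
  have hpt : (gaussianPDF 0 (Real.toNNReal (σ ^ 2)) *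
      fun x => ENNReal.ofReal (γ * rexp ((m * x - m ^ 2 / 2) / σ ^ 2) + (1 - γ)))
      = ENNReal.ofReal γ • gaussianPDF m (Real.toNNReal (σ ^ 2)) +
          ENNReal.ofReal (1 - γ) • gaussianPDF 0 (Real.toNNReal (σ ^ 2)) := by
    funext x
    simp only [Pi.add_apply, Pi.smul_apply, smul_eq_mul]
    have h1 : 0 ≤ gaussianPDFReal 0 (Real.toNNReal (σ ^ 2)) x := gaussianPDFReal_nonneg _ _ _
    have h2 : 0 ≤ gaussianPDFReal m (Real.toNNReal (σ ^ 2)) x := gaussianPDFReal_nonneg _ _ _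
    simp only [Pi.mul_apply, gaussianPDF]
    rw [← ENNReal.ofReal_mul h1, ← ENNReal.ofReal_mul hγ0, ← ENNReal.ofReal_mul (by linarith),
      ← ENNReal.ofReal_add (by positivity) (by nlinarith)]
    congr 1
    have := pdf_shift hσ m x
    nlinarith [this]
  rw [hpt]
  rw [withDensity_add_left ((measurable_gaussianPDF _ _).const_smul _),
    withDensity_smul _ (measurable_gaussianPDF _ _), withDensity_smul _ (measurable_gaussianPDF _ _)]

lemma lintegral_phi_pow {σ γ : ℝ} (hσ : 0 < σ) (hγ0 : 0 ≤ γ) (hγ1 : γ ≤ 1) (m : ℝ) (α : ℕ) :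
    ∫⁻ x, (ENNReal.ofReal (γ * rexp ((m * x - m ^ 2 / 2) / σ ^ 2) + (1 - γ))) ^ α
        ∂(gaussianReal 0 (Real.toNNReal (σ ^ 2)))
      = ENNReal.ofReal (∑ ℓ ∈ Finset.range (α + 1),
          (α.choose ℓ : ℝ) * (1 - γ) ^ (α - ℓ) * γ ^ ℓ *
            rexp ((ℓ : ℝ) * ((ℓ : ℝ) - 1) * m ^ 2 / (2 * σ ^ 2))) := by
  have hv : Real.toNNReal (σ ^ 2) ≠ 0 := by
    simp only [ne_eq, Real.toNNReal_eq_zero, not_le]; positivity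
  have hσ2 : (σ : ℝ) ^ 2 ≠ 0 := by positivity
  set v := Real.toNNReal (σ ^ 2) with hvdef
  set r : ℝ → ℝ := fun x => rexp ((m * x - m ^ 2 / 2) / σ ^ 2) with hrdef
  have hrpos : ∀ x, 0 < r x := fun x => Real.exp_pos _
  have hc : ∀ ℓ : ℕ, (0:ℝ) ≤ (α.choose ℓ : ℝ) * (1 - γ) ^ (α - ℓ) * γ ^ ℓ *
      rexp ((ℓ : ℝ) * ((ℓ : ℝ) - 1) * m ^ 2 / (2 * σ ^ 2)) := by
    intro ℓ
    have h1γ : (0:ℝ) ≤ 1 - γ := by linarith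
    positivity
  -- real pointwise identity
  have key : ∀ x, gaussianPDFReal 0 v x * (γ * r x + (1 - γ)) ^ α
      = ∑ ℓ ∈ Finset.range (α + 1),
          ((α.choose ℓ : ℝ) * (1 - γ) ^ (α - ℓ) * γ ^ ℓ *
            rexp ((ℓ : ℝ) * ((ℓ : ℝ) - 1) * m ^ 2 / (2 * σ ^ 2))) *
          gaussianPDFReal ((ℓ : ℝ) * m) v x := by
    intro x
    rw [add_pow, Finset.mul_sum]
    refine Finset.sum_congr rfl fun ℓ _ => ?_
    have hr : r x ^ ℓ = rexp (((ℓ : ℝ) * m * x - ((ℓ : ℝ) * m) ^ 2 / 2) / σ ^ 2) *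
        rexp ((ℓ : ℝ) * ((ℓ : ℝ) - 1) * m ^ 2 / (2 * σ ^ 2)) := by
      rw [← Real.exp_nat_mul, ← Real.exp_add]
      congr 1
      field_simp
      ring
    have hshift := pdf_shift hσ ((ℓ : ℝ) * m) x
    rw [mul_pow, hr]
    calc gaussianPDFReal 0 v x * (γ ^ ℓ *
          (rexp (((ℓ : ℝ) * m * x - ((ℓ : ℝ) * m) ^ 2 / 2) / σ ^ 2) *
            rexp ((ℓ : ℝ) * ((ℓ : ℝ) - 1) * m ^ 2 / (2 * σ ^ 2))) *
          (1 - γ) ^ (α - ℓ) * (α.choose ℓ : ℝ))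
        = (gaussianPDFReal 0 v x * rexp (((ℓ : ℝ) * m * x - ((ℓ : ℝ) * m) ^ 2 / 2) / σ ^ 2)) *
          (γ ^ ℓ * rexp ((ℓ : ℝ) * ((ℓ : ℝ) - 1) * m ^ 2 / (2 * σ ^ 2)) *
            (1 - γ) ^ (α - ℓ) * (α.choose ℓ : ℝ)) := by ring
      _ = _ := by rw [hshift]; ring
  rw [gaussianReal_of_var_ne_zero 0 hv]
  rw [lintegral_withDensity_eq_lintegral_mul _ (measurable_gaussianPDF _ _)
    ((phi_meas σ γ m).pow_const α)]
  have hpt : (gaussianPDF 0 v * fun x =>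
      (ENNReal.ofReal (γ * r x + (1 - γ))) ^ α)
      = fun x => ∑ ℓ ∈ Finset.range (α + 1),
          ENNReal.ofReal ((α.choose ℓ : ℝ) * (1 - γ) ^ (α - ℓ) * γ ^ ℓ *
            rexp ((ℓ : ℝ) * ((ℓ : ℝ) - 1) * m ^ 2 / (2 * σ ^ 2))) *
          gaussianPDF ((ℓ : ℝ) * m) v x := by
    funext x
    have hφ0 : (0:ℝ) ≤ γ * r x + (1 - γ) :=
      add_nonneg (mul_nonneg hγ0 (hrpos x).le) (by linarith)
    simp only [Pi.mul_apply, gaussianPDF]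
    rw [← ENNReal.ofReal_pow hφ0, ← ENNReal.ofReal_mul (gaussianPDFReal_nonneg _ _ _), key x,
      ENNReal.ofReal_sum_of_nonneg
        (fun ℓ _ => mul_nonneg (hc ℓ) (gaussianPDFReal_nonneg _ _ _))]
    exact Finset.sum_congr rfl fun ℓ _ => (ENNReal.ofReal_mul (hc ℓ))
  rw [hpt, lintegral_finset_sum _ (fun ℓ _ => (measurable_gaussianPDF _ _).const_mul _)]
  have : ∀ ℓ ∈ Finset.range (α + 1),
      ∫⁻ x, ENNReal.ofReal ((α.choose ℓ : ℝ) * (1 - γ) ^ (α - ℓ) * γ ^ ℓ *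
          rexp ((ℓ : ℝ) * ((ℓ : ℝ) - 1) * m ^ 2 / (2 * σ ^ 2))) *
          gaussianPDF ((ℓ : ℝ) * m) v x
        = ENNReal.ofReal ((α.choose ℓ : ℝ) * (1 - γ) ^ (α - ℓ) * γ ^ ℓ *
            rexp ((ℓ : ℝ) * ((ℓ : ℝ) - 1) * m ^ 2 / (2 * σ ^ 2))) := by
    intro ℓ _
    rw [lintegral_const_mul _ (measurable_gaussianPDF _ _), lintegral_gaussianPDF_eq_one _ hv,
      mul_one]
  rw [Finset.sum_congr rfl this, ← ENNReal.ofReal_sum_of_nonneg (fun ℓ _ => hc ℓ)]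

lemma Fsum_one_le {σ γ : ℝ} (hσ : 0 < σ) (hγ0 : 0 ≤ γ) (hγ1 : γ ≤ 1) (α : ℕ) {u : ℝ} (hu : 0 ≤ u) :
    1 ≤ ∑ ℓ ∈ Finset.range (α + 1), (α.choose ℓ : ℝ) * (1 - γ) ^ (α - ℓ) * γ ^ ℓ *
      rexp ((ℓ : ℝ) * ((ℓ : ℝ) - 1) * u / (2 * σ ^ 2)) := by
  have h1γ : (0:ℝ) ≤ 1 - γ := by linarith
  have sumc : ∑ ℓ ∈ Finset.range (α + 1),
      (α.choose ℓ : ℝ) * (1 - γ) ^ (α - ℓ) * γ ^ ℓ = 1 := by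
    have := add_pow γ (1 - γ) α
    simp only [add_sub_cancel, one_pow] at this
    exact Eq.trans (Finset.sum_congr rfl fun ℓ _ => by ring) this.symm
  calc (1:ℝ) = ∑ ℓ ∈ Finset.range (α + 1),
        (α.choose ℓ : ℝ) * (1 - γ) ^ (α - ℓ) * γ ^ ℓ := sumc.symm
    _ ≤ _ := by
      refine Finset.sum_le_sum fun ℓ _ => ?_
      have hcn : (0:ℝ) ≤ (α.choose ℓ : ℝ) * (1 - γ) ^ (α - ℓ) * γ ^ ℓ := by positivity
      have : (1:ℝ) ≤ rexp ((ℓ : ℝ) * ((ℓ : ℝ) - 1) * u / (2 * σ ^ 2)) := by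
        rw [Real.one_le_exp_iff]
        have hℓ : (0:ℝ) ≤ (ℓ : ℝ) * ((ℓ : ℝ) - 1) := by
          rcases Nat.eq_zero_or_pos ℓ with h | h
          · simp [h]
          · have : (1:ℝ) ≤ (ℓ : ℝ) := by exact_mod_cast h
            nlinarith
        positivity
      nlinarith

lemma logF_le {σ γ : ℝ} (hσ : 0 < σ) (hγ0 : 0 ≤ γ) (hγ1 : γ ≤ 1) (α : ℕ) {t s : ℝ}
    (ht : 0 ≤ t) (hts : t ≤ s) (hs : 0 < s) :
    Real.log (∑ ℓ ∈ Finset.range (α + 1), (α.choose ℓ : ℝ) * (1 - γ) ^ (α - ℓ) * γ ^ ℓ *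
        rexp ((ℓ : ℝ) * ((ℓ : ℝ) - 1) * t / (2 * σ ^ 2)))
      ≤ (t / s) * Real.log (∑ ℓ ∈ Finset.range (α + 1),
          (α.choose ℓ : ℝ) * (1 - γ) ^ (α - ℓ) * γ ^ ℓ *
            rexp ((ℓ : ℝ) * ((ℓ : ℝ) - 1) * s / (2 * σ ^ 2))) := by
  have h1γ : (0:ℝ) ≤ 1 - γ := by linarith
  set c : ℕ → ℝ := fun ℓ => (α.choose ℓ : ℝ) * (1 - γ) ^ (α - ℓ) * γ ^ ℓ with hcdef
  have hcnn : ∀ ℓ ∈ Finset.range (α + 1), (0:ℝ) ≤ c ℓ := fun ℓ _ => by positivity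
  have sumc : ∑ ℓ ∈ Finset.range (α + 1), c ℓ = 1 := by
    have := add_pow γ (1 - γ) α
    simp only [add_sub_cancel, one_pow] at this
    exact Eq.trans (Finset.sum_congr rfl fun ℓ _ => by ring) this.symm
  have hθ0 : 0 ≤ t / s := div_nonneg ht hs.le
  have hθ1 : t / s ≤ 1 := (div_le_one hs).mpr hts
  have hFt : 1 ≤ ∑ ℓ ∈ Finset.range (α + 1), c ℓ *
      rexp ((ℓ : ℝ) * ((ℓ : ℝ) - 1) * t / (2 * σ ^ 2)) := Fsum_one_le hσ hγ0 hγ1 α ht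
  have hFs : 1 ≤ ∑ ℓ ∈ Finset.range (α + 1), c ℓ *
      rexp ((ℓ : ℝ) * ((ℓ : ℝ) - 1) * s / (2 * σ ^ 2)) := Fsum_one_le hσ hγ0 hγ1 α (ht.trans hts)
  -- Jensen's inequality for the concave function x ↦ x ^ (t/s)
  have jensen := (Real.concaveOn_rpow hθ0 hθ1).le_map_sum (t := Finset.range (α + 1))
    (w := c) (p := fun ℓ => rexp ((ℓ : ℝ) * ((ℓ : ℝ) - 1) * s / (2 * σ ^ 2)))
    hcnn sumc (fun ℓ _ => Set.mem_Ici.mpr (Real.exp_pos _).le)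
  simp only [smul_eq_mul] at jensen
  have hexp : ∀ ℓ : ℕ, rexp ((ℓ : ℝ) * ((ℓ : ℝ) - 1) * t / (2 * σ ^ 2))
      = rexp ((ℓ : ℝ) * ((ℓ : ℝ) - 1) * s / (2 * σ ^ 2)) ^ (t / s) := by
    intro ℓ
    rw [← Real.exp_mul]
    congr 1
    field_simp
  have hle : ∑ ℓ ∈ Finset.range (α + 1), c ℓ *
      rexp ((ℓ : ℝ) * ((ℓ : ℝ) - 1) * t / (2 * σ ^ 2))
      ≤ (∑ ℓ ∈ Finset.range (α + 1), c ℓ *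
          rexp ((ℓ : ℝ) * ((ℓ : ℝ) - 1) * s / (2 * σ ^ 2))) ^ (t / s) := by
    calc _ = ∑ ℓ ∈ Finset.range (α + 1), c ℓ *
          rexp ((ℓ : ℝ) * ((ℓ : ℝ) - 1) * s / (2 * σ ^ 2)) ^ (t / s) := by
            exact Finset.sum_congr rfl fun ℓ _ => by rw [hexp ℓ]
      _ ≤ _ := jensen
  calc Real.log (∑ ℓ ∈ Finset.range (α + 1), c ℓ *
        rexp ((ℓ : ℝ) * ((ℓ : ℝ) - 1) * t / (2 * σ ^ 2)))
      ≤ Real.log ((∑ ℓ ∈ Finset.range (α + 1), c ℓ *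
          rexp ((ℓ : ℝ) * ((ℓ : ℝ) - 1) * s / (2 * σ ^ 2))) ^ (t / s)) :=
        Real.log_le_log (by linarith) hle
    _ = (t / s) * Real.log (∑ ℓ ∈ Finset.range (α + 1), c ℓ *
          rexp ((ℓ : ℝ) * ((ℓ : ℝ) - 1) * s / (2 * σ ^ 2))) :=
        Real.log_rpow (by linarith) _

theorem renyi_div_sparsified_gaussian_product_le
    (σ γ Δ₂ Δinf : ℝ) (hσ : 0 < σ) (hγ0 : 0 ≤ γ) (hγ1 : γ ≤ 1)
    (hΔinf : 0 < Δinf) (hΔ : Δinf ≤ Δ₂)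
    (α : ℕ) (hα : 2 ≤ α)
    (d : ℕ) (g : Fin d → ℝ)
    (hg2 : Real.sqrt (∑ j, g j ^ 2) ≤ Δ₂)
    (hginf : ∀ j, |g j| ≤ Δinf) :
    renyiDiv (α : ℝ)
      (Measure.pi fun j =>
        ENNReal.ofReal γ • gaussianReal (g j) (Real.toNNReal (σ ^ 2)) +
          ENNReal.ofReal (1 - γ) • gaussianReal 0 (Real.toNNReal (σ ^ 2)))
      (Measure.pi fun _ => gaussianReal 0 (Real.toNNReal (σ ^ 2))) ≤
    (((Δ₂ ^ 2 / Δinf ^ 2) / ((α : ℝ) - 1) * Real.log (∑ ℓ ∈ Finset.range (α + 1),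
        (α.choose ℓ : ℝ) * (1 - γ) ^ (α - ℓ) * γ ^ ℓ *
          Real.exp ((ℓ : ℝ) * ((ℓ : ℝ) - 1) * Δinf ^ 2 / (2 * σ ^ 2))) : ℝ) : EReal) := by
  have h1γ : (0:ℝ) ≤ 1 - γ := by linarith
  set ν : Measure ℝ := gaussianReal 0 (Real.toNNReal (σ ^ 2)) with hν
  set φ : Fin d → ℝ → ℝ≥0∞ := fun j x =>
    ENNReal.ofReal (γ * rexp ((g j * x - g j ^ 2 / 2) / σ ^ 2) + (1 - γ)) with hφ
  have hφm : ∀ j, Measurable (φ j) := fun j => phi_meas σ γ (g j)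
  set Φ : (Fin d → ℝ) → ℝ≥0∞ := fun x => ∏ j, φ j (x j) with hΦ
  have hΦm : Measurable Φ :=
    Finset.measurable_prod _ fun j _ => (hφm j).comp (measurable_pi_apply j)
  set mix : Fin d → Measure ℝ := fun j =>
    ENNReal.ofReal γ • gaussianReal (g j) (Real.toNNReal (σ ^ 2)) +
      ENNReal.ofReal (1 - γ) • gaussianReal 0 (Real.toNNReal (σ ^ 2)) with hmix
  have hrep : ∀ j, mix j = ν.withDensity (φ j) := fun j => mixture_eq hσ hγ0 hγ1 (g j)
  haveI : ∀ j, SigmaFinite (mix j) := by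
    intro j
    rw [hrep j]
    have : IsProbabilityMeasure (ν.withDensity (φ j)) := by
      rw [← hrep j]
      constructor
      simp only [hmix, Measure.coe_add, Measure.coe_smul, Pi.add_apply, Pi.smul_apply,
        measure_univ, smul_eq_mul, mul_one]
      rw [← ENNReal.ofReal_add hγ0 h1γ]
      norm_num
    infer_instance
  have hpi : Measure.pi mix = (Measure.pi fun _ => ν).withDensity Φ := by
    refine Measure.pi_eq fun s hs => ?_
    rw [withDensity_apply _ (MeasurableSet.univ_pi hs), ← lintegral_indicator (MeasurableSet.univ_pi hs) Φ]
    have hind : ∀ x : Fin d → ℝ, (Set.pi Set.univ s).indicator Φ x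
        = ∏ j, (s j).indicator (φ j) (x j) := by
      intro x
      by_cases hx : x ∈ Set.pi Set.univ s
      · rw [Set.indicator_of_mem hx]
        exact Finset.prod_congr rfl fun j _ =>
          (Set.indicator_of_mem (hx j (Set.mem_univ j)) _).symm
      · rw [Set.indicator_of_notMem hx]
        obtain ⟨j, hj⟩ : ∃ j, x j ∉ s j := by simpa [Set.mem_pi] using hx
        exact (Finset.prod_eq_zero (Finset.mem_univ j) (Set.indicator_of_notMem hj _)).symm
    rw [lintegral_congr hind,
      lintegral_pi_prod' _ _ (fun j => (hφm j).indicator (hs j))]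
    refine Finset.prod_congr rfl fun j _ => ?_
    rw [lintegral_indicator (hs j), ← withDensity_apply _ (hs j), ← hrep j]
  have hac : Measure.pi mix ≪ Measure.pi fun _ => ν := by
    rw [hpi]; exact withDensity_absolutelyContinuous _ _
  rw [renyiDiv, if_pos hac]
  have hrn : (Measure.pi mix).rnDeriv (Measure.pi fun _ => ν)
      =ᵐ[Measure.pi fun _ => ν] Φ := by
    rw [hpi]; exact Measure.rnDeriv_withDensity _ hΦm
  set F : ℝ → ℝ := fun t => ∑ ℓ ∈ Finset.range (α + 1),
      (α.choose ℓ : ℝ) * (1 - γ) ^ (α - ℓ) * γ ^ ℓ *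
        rexp ((ℓ : ℝ) * ((ℓ : ℝ) - 1) * t / (2 * σ ^ 2)) with hF
  have hFpos : ∀ u : ℝ, 0 ≤ u → (0:ℝ) < F u := fun u hu =>
    lt_of_lt_of_le one_pos (Fsum_one_le hσ hγ0 hγ1 α hu)
  have hlint : ∫⁻ x, ((Measure.pi mix).rnDeriv (Measure.pi fun _ => ν) x) ^ (α : ℝ)
      ∂(Measure.pi fun _ => ν) = ENNReal.ofReal (∏ j, F (g j ^ 2)) := by
    rw [lintegral_congr_ae (hrn.mono fun x hx => by rw [hx])]
    have : ∀ x : Fin d → ℝ, Φ x ^ (α : ℝ) = ∏ j, (φ j (x j)) ^ α := by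
      intro x
      rw [ENNReal.rpow_natCast, hΦ, Finset.prod_pow]
    rw [lintegral_congr this, lintegral_pi_prod' _ _ (fun j => (hφm j).pow_const α)]
    calc ∏ j, ∫⁻ x, (φ j x) ^ α ∂ν
        = ∏ j, ENNReal.ofReal (F (g j ^ 2)) :=
          Finset.prod_congr rfl fun j _ => lintegral_phi_pow hσ hγ0 hγ1 (g j) α
      _ = ENNReal.ofReal (∏ j, F (g j ^ 2)) :=
          (ENNReal.ofReal_prod_of_nonneg (fun j _ => (hFpos _ (sq_nonneg _)).le)).symm
  rw [hlint]
  have hP1 : (1:ℝ) ≤ ∏ j, F (g j ^ 2) := by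
    have := Finset.prod_le_prod (s := Finset.univ) (f := fun _ : Fin d => (1:ℝ))
      (g := fun j => F (g j ^ 2)) (fun j _ => zero_le_one)
      (fun j _ => Fsum_one_le hσ hγ0 hγ1 α (sq_nonneg _))
    simpa using this
  rw [ENNReal.log_ofReal_of_pos (lt_of_lt_of_le one_pos hP1)]
  rw [← EReal.coe_mul]
  rw [EReal.coe_le_coe_iff]
  -- now a real inequality
  have hα1 : (0:ℝ) < (α : ℝ) - 1 := by
    have : (2:ℝ) ≤ (α : ℝ) := by exact_mod_cast hα
    linarith
  have hΔinf2 : (0:ℝ) < Δinf ^ 2 := by positivity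
  have key : Real.log (∏ j, F (g j ^ 2)) ≤ (Δ₂ ^ 2 / Δinf ^ 2) * Real.log (F (Δinf ^ 2)) := by
    rw [Real.log_prod (fun j _ => (hFpos _ (sq_nonneg _)).ne')]
    have hlogs : ∀ j : Fin d, Real.log (F (g j ^ 2))
        ≤ (g j ^ 2 / Δinf ^ 2) * Real.log (F (Δinf ^ 2)) := by
      intro j
      have hgj : g j ^ 2 ≤ Δinf ^ 2 := by
        have := hginf j
        nlinarith [abs_nonneg (g j), sq_abs (g j)]
      exact logF_le hσ hγ0 hγ1 α (sq_nonneg _) hgj hΔinf2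
    calc ∑ j, Real.log (F (g j ^ 2))
        ≤ ∑ j, (g j ^ 2 / Δinf ^ 2) * Real.log (F (Δinf ^ 2)) :=
          Finset.sum_le_sum fun j _ => hlogs j
      _ = (∑ j, g j ^ 2) / Δinf ^ 2 * Real.log (F (Δinf ^ 2)) := by
          rw [← Finset.sum_mul, ← Finset.sum_div]
      _ ≤ (Δ₂ ^ 2 / Δinf ^ 2) * Real.log (F (Δinf ^ 2)) := by
          have hlognn : (0:ℝ) ≤ Real.log (F (Δinf ^ 2)) :=
            Real.log_nonneg (Fsum_one_le hσ hγ0 hγ1 α hΔinf2.le)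
          have hsum : (∑ j, g j ^ 2) ≤ Δ₂ ^ 2 := by
            have h0 : (0:ℝ) ≤ ∑ j, g j ^ 2 := Finset.sum_nonneg fun j _ => sq_nonneg _
            nlinarith [Real.sq_sqrt h0, Real.sqrt_nonneg (∑ j, g j ^ 2)]
          gcongr
  calc ((α : ℝ) - 1)⁻¹ * Real.log (∏ j, F (g j ^ 2))
      ≤ ((α : ℝ) - 1)⁻¹ * ((Δ₂ ^ 2 / Δinf ^ 2) * Real.log (F (Δinf ^ 2))) := by
        gcongr
    _ = Δ₂ ^ 2 / Δinf ^ 2 / ((α : ℝ) - 1) * Real.log (F (Δinf ^ 2)) := by ring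
end

section
/- Let g_1, …, g_n ∈ ℝ^d, let γ ∈ (0,1], let s_1, …, s_n be independent random vectors in {0,1}^d with i.i.d. Bernoulli(γ) coordinates, and let Z be an independent random vector in ℝ^d with i.i.d. N(0,σ²) coordinates. Define the estimator μ̂ = (1/(nγ)) · ( Σ_{i=1}^n g_i ⊙ s_i + Z ) and the true mean μ = (1/n) Σ_{i=1}^n g_i, where ⊙ denotes the coordinatewise product. Then μ̂ is unbiased, E[μ̂] = μ, and its mean squared error satisfies the exact identity E[ ‖μ̂ − μ‖_2² ] = d·σ²/(n²γ²) + ((1−γ)/(n²γ)) · Σ_{i=1}^n ‖g_i‖_2². -/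
open MeasureTheory ProbabilityTheory Real Filter
open scoped ENNReal NNReal Classical

lemma integrable_dirac_meas {f : ℝ → ℝ} (hf : Measurable f) (a : ℝ) :
    Integrable f (Measure.dirac a) := by
  refine ⟨hf.aestronglyMeasurable, ?_⟩
  simp [HasFiniteIntegral, lintegral_dirac]

lemma bern_isProb {γ : ℝ} (h0 : 0 ≤ γ) (h1 : γ ≤ 1) : IsProbabilityMeasure (bern γ) := by
  constructor
  simp only [bern, Measure.coe_add, Pi.add_apply, Measure.smul_apply, smul_eq_mul,
    measure_univ, mul_one]
  rw [← ENNReal.ofReal_add h0 (by linarith), show γ + (1 - γ) = 1 by ring, ENNReal.ofReal_one]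

lemma integrable_bern {γ : ℝ} {f : ℝ → ℝ} (hf : Measurable f) : Integrable f (bern γ) := by
  rw [bern]
  exact ((integrable_dirac_meas hf 1).smul_measure ENNReal.ofReal_ne_top).add_measure
    ((integrable_dirac_meas hf 0).smul_measure ENNReal.ofReal_ne_top)

lemma integral_bern {γ : ℝ} (h0 : 0 ≤ γ) (h1 : γ ≤ 1) {f : ℝ → ℝ} (hf : Measurable f) :
    ∫ y, f y ∂bern γ = γ * f 1 + (1 - γ) * f 0 := by
  rw [bern, integral_add_measure ((integrable_dirac_meas hf 1).smul_measure ENNReal.ofReal_ne_top)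
      ((integrable_dirac_meas hf 0).smul_measure ENNReal.ofReal_ne_top),
    integral_smul_measure, integral_smul_measure, integral_dirac, integral_dirac,
    ENNReal.toReal_ofReal h0, ENNReal.toReal_ofReal (by linarith)]
  simp [smul_eq_mul]

lemma hasDerivAt_negExpSq {b : ℝ} (hb : 0 < b) (x : ℝ) :
    HasDerivAt (fun y : ℝ => -(2*b)⁻¹ * Real.exp (-b*y^2)) (x * Real.exp (-b*x^2)) x := by
  have h1 : HasDerivAt (fun y : ℝ => -b*y^2) (-b*(2*x)) x := by
    simpa using ((hasDerivAt_pow 2 x).const_mul (-b))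
  have h2 := (Real.hasDerivAt_exp (-b*x^2)).comp x h1
  have h3 := h2.const_mul (-(2*b)⁻¹)
  refine h3.congr_deriv ?_
  have hb2 : (2*b)⁻¹*(2*b) = 1 := inv_mul_cancel₀ (by positivity)
  linear_combination (x * Real.exp (-b*x^2)) * hb2

lemma tendsto_negExpSq {b : ℝ} (hb : 0 < b) (l : Filter ℝ)
    (hl : Filter.Tendsto (fun y : ℝ => y^2) l atTop) :
    Filter.Tendsto (fun y : ℝ => -(2*b)⁻¹ * Real.exp (-b*y^2)) l (nhds 0) := by
  have h1 : Filter.Tendsto (fun y : ℝ => b * y^2) l atTop := hl.const_mul_atTop hb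
  have h2 : Filter.Tendsto (fun y : ℝ => -(b*y^2)) l atBot := tendsto_neg_atTop_atBot.comp h1
  have h3 : Filter.Tendsto (fun y : ℝ => Real.exp (-(b*y^2))) l (nhds 0) :=
    Real.tendsto_exp_atBot.comp h2
  have h4 := h3.const_mul (-(2*b)⁻¹)
  simpa [neg_mul] using h4

lemma integral_id_exp {b : ℝ} (hb : 0 < b) : ∫ x : ℝ, x * Real.exp (-b*x^2) = 0 := by
  have hsqtop : Filter.Tendsto (fun y : ℝ => y^2) atTop atTop :=
    tendsto_pow_atTop two_ne_zero
  have hsqbot : Filter.Tendsto (fun y : ℝ => y^2) atBot atTop := by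
    have := hsqtop.comp tendsto_neg_atBot_atTop
    refine this.congr (fun y => ?_)
    simp [Function.comp, neg_sq]
  have h := integral_of_hasDerivAt_of_tendsto (hasDerivAt_negExpSq hb)
    (integrable_mul_exp_neg_mul_sq hb) (tendsto_negExpSq hb _ hsqbot) (tendsto_negExpSq hb _ hsqtop)
  simpa using h

lemma integrable_sq_exp {b : ℝ} (hb : 0 < b) :
    Integrable (fun x : ℝ => x^2 * Real.exp (-b*x^2)) := by
  have h := integrable_rpow_mul_exp_neg_mul_sq hb (s := 2) (by norm_num)
  refine h.congr (Filter.Eventually.of_forall fun x => ?_)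
  show x ^ (2:ℝ) * Real.exp (-b*x^2) = x ^ (2:ℕ) * Real.exp (-b*x^2)
  rw [show ((2:ℝ)) = ((2:ℕ):ℝ) by norm_num, Real.rpow_natCast]

lemma integral_sq_exp {b : ℝ} (hb : 0 < b) :
    ∫ x : ℝ, x^2 * Real.exp (-b*x^2) = (2*b)⁻¹ * Real.sqrt (π / b) := by
  have h1 : Integrable ((fun x:ℝ => x) * fun x => x * Real.exp (-b*x^2)) := by
    have he : ((fun x:ℝ => x) * fun x => x * Real.exp (-b*x^2))
        = fun x => x^2 * Real.exp (-b*x^2) := by funext x; simp [Pi.mul_apply]; ring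
    rw [he]; exact integrable_sq_exp hb
  have h2 : Integrable ((fun _:ℝ => (1:ℝ)) * fun x => -(2*b)⁻¹ * Real.exp (-b*x^2)) := by
    have he : ((fun _:ℝ => (1:ℝ)) * fun x => -(2*b)⁻¹ * Real.exp (-b*x^2))
        = fun x => -(2*b)⁻¹ * Real.exp (-b*x^2) := by funext x; simp
    rw [he]; exact (integrable_exp_neg_mul_sq hb).const_mul _
  have h3 : Integrable ((fun x:ℝ => x) * fun x => -(2*b)⁻¹ * Real.exp (-b*x^2)) := by
    have he : ((fun x:ℝ => x) * fun x => -(2*b)⁻¹ * Real.exp (-b*x^2))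
        = fun x => -(2*b)⁻¹ * (x * Real.exp (-b*x^2)) := by funext x; simp [Pi.mul_apply]; ring
    rw [he]; exact (integrable_mul_exp_neg_mul_sq hb).const_mul _
  have h := integral_mul_deriv_eq_deriv_mul_of_integrable
    (u := fun x:ℝ => x) (u' := fun _ => (1:ℝ))
    (v := fun x => -(2*b)⁻¹ * Real.exp (-b*x^2)) (v' := fun x => x * Real.exp (-b*x^2))
    (fun x _ => hasDerivAt_id x) (fun x _ => hasDerivAt_negExpSq hb x) h1 h2 h3
  have e1 : ∫ x:ℝ, x * (x * Real.exp (-b*x^2)) = ∫ x:ℝ, x^2 * Real.exp (-b*x^2) := by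
    congr 1; funext x; ring
  have e2 : ∫ x:ℝ, (1:ℝ) * (-(2*b)⁻¹ * Real.exp (-b*x^2))
      = -(2*b)⁻¹ * Real.sqrt (π / b) := by
    simp only [one_mul]
    rw [MeasureTheory.integral_const_mul, integral_gaussian]
  rw [e1, e2] at h
  rw [h]; ring


lemma gaussianPDFReal_zero_mean (v : ℝ≥0) (x : ℝ) :
    gaussianPDFReal 0 v x = (Real.sqrt (2*π*(v:ℝ)))⁻¹ * Real.exp (-(2*(v:ℝ))⁻¹ * x^2) := by
  rw [gaussianPDFReal]
  rw [show (-(x - 0) ^ 2 / (2 * (v:ℝ))) = -(2*(v:ℝ))⁻¹ * x^2 from by ring]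

lemma integral_fun_gaussianReal {v : ℝ≥0} (hv : v ≠ 0) (f : ℝ → ℝ) :
    ∫ x, f x ∂gaussianReal 0 v = ∫ x, gaussianPDFReal 0 v x * f x := by
  rw [gaussianReal_of_var_ne_zero _ hv, gaussianPDF_def]
  have h : (fun x => ENNReal.ofReal (gaussianPDFReal 0 v x))
      = fun x => ((Real.toNNReal (gaussianPDFReal 0 v x) : ℝ≥0) : ℝ≥0∞) := rfl
  rw [h, integral_withDensity_eq_integral_smul ((measurable_gaussianPDFReal 0 v).real_toNNReal) f]
  congr 1; funext x
  simp [NNReal.smul_def, Real.coe_toNNReal _ (gaussianPDFReal_nonneg 0 v x)]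

lemma integrable_gaussianReal_iff {v : ℝ≥0} (hv : v ≠ 0) (f : ℝ → ℝ) :
    Integrable f (gaussianReal 0 v) ↔ Integrable (fun x => gaussianPDFReal 0 v x * f x) := by
  rw [gaussianReal_of_var_ne_zero _ hv, gaussianPDF_def]
  have h : (fun x => ENNReal.ofReal (gaussianPDFReal 0 v x))
      = fun x => ((Real.toNNReal (gaussianPDFReal 0 v x) : ℝ≥0) : ℝ≥0∞) := rfl
  rw [h, integrable_withDensity_iff_integrable_smul
    ((measurable_gaussianPDFReal 0 v).real_toNNReal)]
  constructor <;> intro hh <;> refine hh.congr (Filter.Eventually.of_forall fun x => ?_) <;>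
    simp [NNReal.smul_def, Real.coe_toNNReal _ (gaussianPDFReal_nonneg 0 v x)]

lemma integrable_id_gaussianReal (v : ℝ≥0) : Integrable (fun x : ℝ => x) (gaussianReal 0 v) := by
  by_cases hv : v = 0
  · simp only [hv, gaussianReal_zero_var]
    exact integrable_dirac_meas measurable_id 0
  · rw [integrable_gaussianReal_iff hv]
    have hvpos : 0 < (v:ℝ) := NNReal.coe_pos.mpr (pos_iff_ne_zero.mpr hv)
    have hb : 0 < (2*(v:ℝ))⁻¹ := by positivity
    have := (integrable_mul_exp_neg_mul_sq hb).const_mul (Real.sqrt (2*π*(v:ℝ)))⁻¹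
    refine this.congr (Filter.Eventually.of_forall fun x => ?_)
    simp only [gaussianPDFReal_zero_mean]; ring

lemma integral_id_gaussianReal (v : ℝ≥0) : ∫ x, x ∂gaussianReal 0 v = 0 := by
  by_cases hv : v = 0
  · simp [hv, gaussianReal_zero_var, integral_dirac]
  · rw [integral_fun_gaussianReal hv]
    have hvpos : 0 < (v:ℝ) := NNReal.coe_pos.mpr (pos_iff_ne_zero.mpr hv)
    have hb : 0 < (2*(v:ℝ))⁻¹ := by positivity
    have h : ∀ x : ℝ, gaussianPDFReal 0 v x * x
        = (Real.sqrt (2*π*(v:ℝ)))⁻¹ * (x * Real.exp (-(2*(v:ℝ))⁻¹ * x^2)) := by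
      intro x; rw [gaussianPDFReal_zero_mean]; ring
    simp only [h]
    rw [MeasureTheory.integral_const_mul, integral_id_exp hb, mul_zero]

lemma integrable_sq_gaussianReal (v : ℝ≥0) :
    Integrable (fun x : ℝ => x^2) (gaussianReal 0 v) := by
  by_cases hv : v = 0
  · simp only [hv, gaussianReal_zero_var]
    exact integrable_dirac_meas (by measurability) 0
  · rw [integrable_gaussianReal_iff hv]
    have hvpos : 0 < (v:ℝ) := NNReal.coe_pos.mpr (pos_iff_ne_zero.mpr hv)
    have hb : 0 < (2*(v:ℝ))⁻¹ := by positivity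
    have := (integrable_sq_exp hb).const_mul (Real.sqrt (2*π*(v:ℝ)))⁻¹
    refine this.congr (Filter.Eventually.of_forall fun x => ?_)
    simp only [gaussianPDFReal_zero_mean]; ring

lemma integral_sq_gaussianReal (v : ℝ≥0) : ∫ x, x^2 ∂gaussianReal 0 v = (v:ℝ) := by
  by_cases hv : v = 0
  · simp [hv, gaussianReal_zero_var, integral_dirac]
  · rw [integral_fun_gaussianReal hv]
    have hvpos : 0 < (v:ℝ) := NNReal.coe_pos.mpr (pos_iff_ne_zero.mpr hv)
    have hb : 0 < (2*(v:ℝ))⁻¹ := by positivity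
    have h : ∀ x : ℝ, gaussianPDFReal 0 v x * x^2
        = (Real.sqrt (2*π*(v:ℝ)))⁻¹ * (x^2 * Real.exp (-(2*(v:ℝ))⁻¹ * x^2)) := by
      intro x; rw [gaussianPDFReal_zero_mean]; ring
    simp only [h]
    rw [MeasureTheory.integral_const_mul, integral_sq_exp hb]
    have h1 : (2*(2*(v:ℝ))⁻¹)⁻¹ = (v:ℝ) := by field_simp
    have h2 : π / (2*(v:ℝ))⁻¹ = 2*π*(v:ℝ) := by field_simp
    have hs : Real.sqrt (2*π*(v:ℝ)) ≠ 0 :=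
      ne_of_gt (Real.sqrt_pos.2 (by positivity))
    rw [h1, h2]
    field_simp

lemma pi_prod_integral {ι : Type*} [Fintype ι] {α : Type*} [MeasurableSpace α]
    (μ0 : Measure α) [IsProbabilityMeasure μ0] (F : ι → α → ℝ)
    (hF : ∀ m, Integrable (F m) μ0) :
    Integrable (fun x : ι → α => ∏ m, F m (x m)) (Measure.pi fun _ => μ0) ∧
      ∫ x : ι → α, ∏ m, F m (x m) ∂(Measure.pi fun _ => μ0) = ∏ m, ∫ y, F m y ∂μ0 := by
  letI : MeasureSpace α := ⟨μ0⟩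
  haveI : SigmaFinite (volume : Measure α) := inferInstanceAs (SigmaFinite μ0)
  have hvol : (Measure.pi fun _ : ι => μ0) = (volume : Measure (ι → α)) := rfl
  rw [hvol]
  exact ⟨Integrable.fintype_prod (f := F) hF, integral_fintype_prod_volume_eq_prod F⟩

lemma pi_eval_integral {ι : Type*} [Fintype ι] {α : Type*} [MeasurableSpace α]
    (μ0 : Measure α) [IsProbabilityMeasure μ0] {f : α → ℝ}
    (hf : Integrable f μ0) (i : ι) :
    Integrable (fun x : ι → α => f (x i)) (Measure.pi fun _ => μ0) ∧
      ∫ x : ι → α, f (x i) ∂(Measure.pi fun _ => μ0) = ∫ y, f y ∂μ0 := by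
  classical
  set F : ι → α → ℝ := fun m => if m = i then f else fun _ => 1 with hF
  have hint : ∀ m, Integrable (F m) μ0 := by
    intro m
    by_cases h : m = i <;> simp [hF, h, hf, integrable_const]
  obtain ⟨h1, h2⟩ := pi_prod_integral μ0 F hint
  have hprod : ∀ x : ι → α, (∏ m, F m (x m)) = f (x i) := by
    intro x
    have : ∀ m, F m (x m) = if m = i then f (x m) else 1 := by
      intro m; by_cases h : m = i <;> simp [hF, h]
    simp only [this]
    simp
  have hpint : (∏ m, ∫ y, F m y ∂μ0) = ∫ y, f y ∂μ0 := by
    have : ∀ m, ∫ y, F m y ∂μ0 = if m = i then ∫ y, f y ∂μ0 else 1 := by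
      intro m; by_cases h : m = i <;> simp [hF, h]
    simp only [this]
    simp
  constructor
  · exact h1.congr (Filter.Eventually.of_forall fun x => hprod x)
  · rw [← hpint, ← h2]
    exact integral_congr_ae (Filter.Eventually.of_forall fun x => (hprod x).symm)

lemma pi_eval_mul_integral {ι : Type*} [Fintype ι] {α : Type*} [MeasurableSpace α]
    (μ0 : Measure α) [IsProbabilityMeasure μ0] {f g : α → ℝ}
    (hf : Integrable f μ0) (hg : Integrable g μ0) {i k : ι} (hik : i ≠ k) :
    Integrable (fun x : ι → α => f (x i) * g (x k)) (Measure.pi fun _ => μ0) ∧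
      ∫ x : ι → α, f (x i) * g (x k) ∂(Measure.pi fun _ => μ0)
        = (∫ y, f y ∂μ0) * ∫ y, g y ∂μ0 := by
  classical
  set F : ι → α → ℝ := fun m => if m = i then f else if m = k then g else fun _ => 1 with hF
  have hint : ∀ m, Integrable (F m) μ0 := by
    intro m
    by_cases h : m = i
    · simp [hF, h, hf]
    · by_cases h' : m = k <;> simp [hF, h, h', hg, integrable_const, Ne.symm hik]
  obtain ⟨h1, h2⟩ := pi_prod_integral μ0 F hint
  have key : ∀ (ψ : ι → (α → ℝ) → ℝ), (∀ m, ψ m (fun _ => 1) = 1) →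
      (∏ m, ψ m (F m)) = ψ i f * ψ k g := by
    intro ψ hψ
    rw [← Finset.mul_prod_erase Finset.univ (fun m => ψ m (F m)) (Finset.mem_univ i),
      ← Finset.mul_prod_erase ((Finset.univ).erase i) (fun m => ψ m (F m))
        (Finset.mem_erase.2 ⟨Ne.symm hik, Finset.mem_univ k⟩)]
    have e1 : F i = f := by simp [hF]
    have e2 : F k = g := by simp [hF, Ne.symm hik]
    rw [e1, e2]
    have e3 : ∀ m ∈ ((Finset.univ).erase i).erase k, ψ m (F m) = 1 := by
      intro m hm
      have h1m : m ≠ k := (Finset.mem_erase.1 hm).1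
      have h2m : m ≠ i := (Finset.mem_erase.1 (Finset.mem_erase.1 hm).2).1
      simp [hF, h1m, h2m, hψ m]
    rw [Finset.prod_congr rfl e3]
    simp [mul_assoc]
  have hprod : ∀ x : ι → α, (∏ m, F m (x m)) = f (x i) * g (x k) :=
    fun x => key (fun m h => h (x m)) (fun m => rfl)
  have hpint : (∏ m, ∫ y, F m y ∂μ0) = (∫ y, f y ∂μ0) * ∫ y, g y ∂μ0 :=
    key (fun _ h => ∫ y, h y ∂μ0) (fun m => by simp)
  constructor
  · exact h1.congr (Filter.Eventually.of_forall fun x => hprod x)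
  · rw [← hpint, ← h2]
    exact integral_congr_ae (Filter.Eventually.of_forall fun x => (hprod x).symm)

theorem csgm_estimator_unbiased_and_mse_identity
    (σ γ : ℝ) (hγ0 : 0 < γ) (hγ1 : γ ≤ 1)
    (d n : ℕ) (hn : 0 < n) (g : Fin n → Fin d → ℝ)
    (P : Measure ((Fin n → Fin d → ℝ) × (Fin d → ℝ)))
    (hP : P = (Measure.pi fun _ : Fin n => Measure.pi fun _ : Fin d => bern γ).prod
        (Measure.pi fun _ : Fin d => gaussianReal 0 (Real.toNNReal (σ ^ 2))))
    (μhat : (Fin n → Fin d → ℝ) × (Fin d → ℝ) → Fin d → ℝ)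
    (hμhat : ∀ ω j, μhat ω j = (1 / (n * γ)) * ((∑ i, g i j * ω.1 i j) + ω.2 j))
    (μbar : Fin d → ℝ) (hμbar : ∀ j, μbar j = (1 / (n : ℝ)) * ∑ i, g i j) :
    (∀ j, ∫ ω, μhat ω j ∂P = μbar j) ∧
    ∫ ω, ∑ j, (μhat ω j - μbar j) ^ 2 ∂P =
      d * σ ^ 2 / (n ^ 2 * γ ^ 2) + ((1 - γ) / (n ^ 2 * γ)) * ∑ i, ∑ j, g i j ^ 2 := by
  have hγne : γ ≠ 0 := hγ0.ne'
  have hnne : (n : ℝ) ≠ 0 := Nat.cast_ne_zero.2 hn.ne'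
  haveI hbp : IsProbabilityMeasure (bern γ) := bern_isProb hγ0.le hγ1
  set ν : Measure ℝ := bern γ with hν
  set piν : Measure (Fin d → ℝ) := Measure.pi (fun _ : Fin d => ν) with hpiν
  set B : Measure (Fin n → Fin d → ℝ) := Measure.pi (fun _ : Fin n => piν) with hB
  set v : ℝ≥0 := Real.toNNReal (σ ^ 2) with hv
  set Gm : Measure (Fin d → ℝ) := Measure.pi (fun _ : Fin d => gaussianReal 0 v) with hGm
  have hvr : (v : ℝ) = σ ^ 2 := Real.coe_toNNReal _ (sq_nonneg σ)
  set c : ℝ := 1 / (n * γ) with hc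
  haveI hppiν : IsProbabilityMeasure piν := by rw [hpiν]; infer_instance
  haveI hpB : IsProbabilityMeasure B := by rw [hB]; infer_instance
  haveI hpGm : IsProbabilityMeasure Gm := by rw [hGm]; infer_instance
  -- bern moments
  have hm1 : Measurable (fun y : ℝ => y - γ) := measurable_id.sub measurable_const
  have hm2 : Measurable (fun y : ℝ => (y - γ) * (y - γ)) := hm1.mul hm1
  have hν1 : Integrable (fun y : ℝ => y) ν := integrable_bern measurable_id
  have hν1v : ∫ y, y ∂ν = γ := by
    have h : ∫ y, y ∂ν = γ * 1 + (1 - γ) * 0 :=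
      integral_bern hγ0.le hγ1 (f := fun y => y) measurable_id
    rw [h]; ring
  have hνc : Integrable (fun y : ℝ => y - γ) ν := integrable_bern hm1
  have hνcv : ∫ y, y - γ ∂ν = 0 := by
    have h : ∫ y, y - γ ∂ν = γ * (1 - γ) + (1 - γ) * (0 - γ) :=
      integral_bern hγ0.le hγ1 (f := fun y => y - γ) hm1
    rw [h]; ring
  have hνc2 : Integrable (fun y : ℝ => (y - γ) * (y - γ)) ν := integrable_bern hm2
  have hνc2v : ∫ y, (y - γ) * (y - γ) ∂ν = γ * (1 - γ) := by
    have h : ∫ y, (y - γ) * (y - γ) ∂ν = γ * ((1 - γ) * (1 - γ)) + (1 - γ) * ((0 - γ) * (0 - γ)) :=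
      integral_bern hγ0.le hγ1 (f := fun y => (y - γ) * (y - γ)) hm2
    rw [h]; ring
  -- piν facts
  have hpi1 : ∀ j : Fin d, Integrable (fun w : Fin d → ℝ => w j) piν :=
    fun j => (pi_eval_integral ν hν1 j).1
  have hpi1v : ∀ j : Fin d, ∫ w, w j ∂piν = γ :=
    fun j => (pi_eval_integral ν hν1 j).2.trans hν1v
  have hpic : ∀ j : Fin d, Integrable (fun w : Fin d → ℝ => w j - γ) piν :=
    fun j => (pi_eval_integral ν hνc j).1
  have hpicv : ∀ j : Fin d, ∫ w, w j - γ ∂piν = 0 :=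
    fun j => (pi_eval_integral ν hνc j).2.trans hνcv
  have hpicc : ∀ j l : Fin d, Integrable (fun w : Fin d → ℝ => (w j - γ) * (w l - γ)) piν := by
    intro j l
    by_cases hjl : j = l
    · subst hjl; exact (pi_eval_integral ν hνc2 j).1
    · exact (pi_eval_mul_integral ν hνc hνc hjl).1
  have hpiccv : ∀ j l : Fin d, ∫ w, (w j - γ) * (w l - γ) ∂piν
      = if j = l then γ * (1 - γ) else 0 := by
    intro j l
    by_cases hjl : j = l
    · subst hjl
      simpa using (pi_eval_integral ν hνc2 j).2.trans hνc2v
    · simp only [hjl, if_false]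
      have h := (pi_eval_mul_integral ν hνc hνc hjl).2
      have h' : ∫ w : Fin d → ℝ, (w j - γ) * (w l - γ) ∂piν = (∫ y, y - γ ∂ν) * ∫ y, y - γ ∂ν := h
      rw [h', hνcv, mul_zero]
  -- B facts
  have hBev : ∀ (i : Fin n) (j : Fin d), Integrable (fun x : Fin n → Fin d → ℝ => x i j) B :=
    fun i j => (pi_eval_integral piν (hpi1 j) i).1
  have hBevv : ∀ i j, ∫ x : Fin n → Fin d → ℝ, x i j ∂B = γ :=
    fun i j => (pi_eval_integral piν (hpi1 j) i).2.trans (hpi1v j)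
  have hBc : ∀ (i : Fin n) (j : Fin d), Integrable (fun x : Fin n → Fin d → ℝ => x i j - γ) B :=
    fun i j => (pi_eval_integral piν (hpic j) i).1
  have hBcv : ∀ (i : Fin n) (j : Fin d), ∫ x : Fin n → Fin d → ℝ, x i j - γ ∂B = 0 :=
    fun i j => (pi_eval_integral piν (hpic j) i).2.trans (hpicv j)
  have hBmom : ∀ (i k : Fin n) (j l : Fin d),
      Integrable (fun x : Fin n → Fin d → ℝ => (x i j - γ) * (x k l - γ)) B := by
    intro i k j l
    by_cases hik : i = k
    · subst hik; exact (pi_eval_integral piν (hpicc j l) i).1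
    · exact (pi_eval_mul_integral piν (hpic j) (hpic l) hik).1
  have hBmomv : ∀ (i k : Fin n) (j l : Fin d),
      ∫ x : Fin n → Fin d → ℝ, (x i j - γ) * (x k l - γ) ∂B
        = if i = k ∧ j = l then γ * (1 - γ) else 0 := by
    intro i k j l
    by_cases hik : i = k
    · subst hik
      have h : ∫ x : Fin n → Fin d → ℝ, (x i j - γ) * (x i l - γ) ∂B
          = if j = l then γ * (1 - γ) else 0 :=
        (pi_eval_integral piν (hpicc j l) i).2.trans (hpiccv j l)
      rw [h]
      simp
    · have h : ∫ x : Fin n → Fin d → ℝ, (x i j - γ) * (x k l - γ) ∂B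
          = (∫ w, w j - γ ∂piν) * ∫ w, w l - γ ∂piν :=
        (pi_eval_mul_integral piν (hpic j) (hpic l) hik).2
      rw [h, hpicv j, zero_mul]
      simp [hik]
  -- gaussian facts
  have hG1 : ∀ j : Fin d, Integrable (fun z : Fin d → ℝ => z j) Gm :=
    fun j => (pi_eval_integral _ (integrable_id_gaussianReal v) j).1
  have hG1v : ∀ j, ∫ z : Fin d → ℝ, z j ∂Gm = 0 :=
    fun j => (pi_eval_integral _ (integrable_id_gaussianReal v) j).2.trans
      (integral_id_gaussianReal v)
  have hG2 : ∀ j : Fin d, Integrable (fun z : Fin d → ℝ => z j ^ 2) Gm :=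
    fun j => (pi_eval_integral _ (integrable_sq_gaussianReal v) j).1
  have hG2v : ∀ j, ∫ z : Fin d → ℝ, z j ^ 2 ∂Gm = σ ^ 2 :=
    fun j => (pi_eval_integral _ (integrable_sq_gaussianReal v) j).2.trans
      ((integral_sq_gaussianReal v).trans hvr)
  -- Part 1
  have part1 : ∀ j, ∫ ω, μhat ω j ∂P = μbar j := by
    intro j
    have hF1 : Integrable (fun s : Fin n → Fin d → ℝ => c * ∑ i, g i j * s i j) B :=
      (integrable_finset_sum _ (fun i _ => (hBev i j).const_mul (g i j))).const_mul c
    have hF1v : ∫ s : Fin n → Fin d → ℝ, c * ∑ i, g i j * s i j ∂B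
        = c * (γ * ∑ i, g i j) := by
      rw [MeasureTheory.integral_const_mul,
        integral_finset_sum _ (fun i _ => (hBev i j).const_mul (g i j))]
      congr 1
      rw [Finset.mul_sum]
      refine Finset.sum_congr rfl fun i _ => ?_
      rw [MeasureTheory.integral_const_mul, hBevv i j]
      ring
    have hG1' : Integrable (fun z : Fin d → ℝ => c * z j) Gm := (hG1 j).const_mul c
    have hG1'v : ∫ z : Fin d → ℝ, c * z j ∂Gm = 0 := by
      rw [MeasureTheory.integral_const_mul, hG1v j, mul_zero]
    have hpt : ∀ ω : (Fin n → Fin d → ℝ) × (Fin d → ℝ), μhat ω j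
        = (c * ∑ i, g i j * ω.1 i j) * 1 + 1 * (c * ω.2 j) := by
      intro ω
      rw [hμhat ω j]
      ring
    have hintA : Integrable (fun ω : (Fin n → Fin d → ℝ) × (Fin d → ℝ)
        => (c * ∑ i, g i j * ω.1 i j) * 1) (B.prod Gm) :=
      hF1.mul_prod (integrable_const 1)
    have hintB : Integrable (fun ω : (Fin n → Fin d → ℝ) × (Fin d → ℝ)
        => 1 * (c * ω.2 j)) (B.prod Gm) :=
      (integrable_const 1).mul_prod hG1'
    have hvalA : ∫ ω : (Fin n → Fin d → ℝ) × (Fin d → ℝ),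
        (c * ∑ i, g i j * ω.1 i j) * 1 ∂(B.prod Gm)
          = (∫ s : Fin n → Fin d → ℝ, c * ∑ i, g i j * s i j ∂B) * ∫ _z : Fin d → ℝ, (1:ℝ) ∂Gm :=
      integral_prod_mul (μ := B) (ν := Gm)
        (fun s : Fin n → Fin d → ℝ => c * ∑ i, g i j * s i j) (fun _ : Fin d → ℝ => (1:ℝ))
    have hvalB : ∫ ω : (Fin n → Fin d → ℝ) × (Fin d → ℝ), 1 * (c * ω.2 j) ∂(B.prod Gm)
          = (∫ _s : Fin n → Fin d → ℝ, (1:ℝ) ∂B) * ∫ z : Fin d → ℝ, c * z j ∂Gm :=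
      integral_prod_mul (μ := B) (ν := Gm)
        (fun _ : Fin n → Fin d → ℝ => (1:ℝ)) (fun z : Fin d → ℝ => c * z j)
    rw [hP, integral_congr_ae (Filter.Eventually.of_forall hpt),
      integral_add hintA hintB, hvalA, hvalB, hF1v, hG1'v, hμbar j]
    simp only [integral_const, measure_univ, probReal_univ, ENNReal.toReal_one, smul_eq_mul, one_mul, mul_one,
      mul_zero, add_zero, hc]
    field_simp
  -- Part 2
  have hkey : ∀ (ω : (Fin n → Fin d → ℝ) × (Fin d → ℝ)) (j : Fin d), μhat ω j - μbar j
      = c * ((∑ i, g i j * (ω.1 i j - γ)) + ω.2 j) := by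
    intro ω j
    rw [hμhat ω j, hμbar j]
    have e : (∑ i, g i j * (ω.1 i j - γ))
        = (∑ i, g i j * ω.1 i j) - (∑ i, g i j) * γ := by
      rw [Finset.sum_mul, ← Finset.sum_sub_distrib]
      exact Finset.sum_congr rfl fun i _ => by ring
    rw [e, hc]
    field_simp
    ring
  have hAint : ∀ j : Fin d, Integrable (fun s : Fin n → Fin d → ℝ
      => ∑ i, g i j * (s i j - γ)) B :=
    fun j => integrable_finset_sum _ (fun i _ => (hBc i j).const_mul (g i j))
  have hAv : ∀ j, ∫ s : Fin n → Fin d → ℝ, ∑ i, g i j * (s i j - γ) ∂B = 0 := by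
    intro j
    rw [integral_finset_sum _ (fun i _ => (hBc i j).const_mul (g i j))]
    refine Finset.sum_eq_zero fun i _ => ?_
    rw [MeasureTheory.integral_const_mul, hBcv i j, mul_zero]
  have hss : ∀ (j : Fin d) (s : Fin n → Fin d → ℝ),
      (∑ i, ∑ k, (g i j * g k j) * ((s i j - γ) * (s k j - γ)))
        = (∑ i, g i j * (s i j - γ)) * (∑ i, g i j * (s i j - γ)) := by
    intro j s
    rw [Finset.sum_mul_sum]
    exact Finset.sum_congr rfl fun i _ => Finset.sum_congr rfl fun k _ => by ring
  have hA2int : ∀ j, Integrable (fun s : Fin n → Fin d → ℝ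
      => (∑ i, g i j * (s i j - γ)) * (∑ i, g i j * (s i j - γ))) B := by
    intro j
    have h : Integrable (fun s : Fin n → Fin d → ℝ
        => ∑ i, ∑ k, (g i j * g k j) * ((s i j - γ) * (s k j - γ))) B :=
      integrable_finset_sum _ (fun i _ => integrable_finset_sum _
        (fun k _ => (hBmom i k j j).const_mul _))
    exact h.congr (Filter.Eventually.of_forall (hss j))
  have hA2v : ∀ j, ∫ s : Fin n → Fin d → ℝ,
      (∑ i, g i j * (s i j - γ)) * (∑ i, g i j * (s i j - γ)) ∂B
        = γ * (1 - γ) * ∑ i, g i j ^ 2 := by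
    intro j
    calc ∫ s : Fin n → Fin d → ℝ,
        (∑ i, g i j * (s i j - γ)) * (∑ i, g i j * (s i j - γ)) ∂B
        = ∫ s : Fin n → Fin d → ℝ,
            ∑ i, ∑ k, (g i j * g k j) * ((s i j - γ) * (s k j - γ)) ∂B :=
          integral_congr_ae (Filter.Eventually.of_forall fun s => (hss j s).symm)
      _ = ∑ i, ∑ k, ∫ s : Fin n → Fin d → ℝ,
            (g i j * g k j) * ((s i j - γ) * (s k j - γ)) ∂B := by
          rw [integral_finset_sum _ (fun i _ => integrable_finset_sum _
            (fun k _ => (hBmom i k j j).const_mul _))]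
          exact Finset.sum_congr rfl fun i _ => integral_finset_sum _
            (fun k _ => (hBmom i k j j).const_mul _)
      _ = ∑ i, ∑ k, (g i j * g k j) * (if i = k ∧ j = j then γ * (1 - γ) else 0) := by
          refine Finset.sum_congr rfl fun i _ => Finset.sum_congr rfl fun k _ => ?_
          rw [MeasureTheory.integral_const_mul, hBmomv i k j j]
      _ = γ * (1 - γ) * ∑ i, g i j ^ 2 := by
          simp only [and_true, mul_ite, mul_zero, Finset.sum_ite_eq, Finset.mem_univ, if_true]
          rw [Finset.mul_sum]
          exact Finset.sum_congr rfl fun i _ => by ring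
  have hPj : ∀ j : Fin d,
      Integrable (fun ω : (Fin n → Fin d → ℝ) × (Fin d → ℝ) => (μhat ω j - μbar j) ^ 2)
          (B.prod Gm) ∧
        ∫ ω, (μhat ω j - μbar j) ^ 2 ∂(B.prod Gm)
          = c * c * (γ * (1 - γ) * ∑ i, g i j ^ 2) + c * c * σ ^ 2 := by
    intro j
    set F1 : (Fin n → Fin d → ℝ) → ℝ := fun s =>
      (c * c) * ((∑ i, g i j * (s i j - γ)) * (∑ i, g i j * (s i j - γ))) with hF1
    set F2 : (Fin n → Fin d → ℝ) → ℝ := fun s => (2 * (c * c)) * ∑ i, g i j * (s i j - γ)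
      with hF2
    set G2' : (Fin d → ℝ) → ℝ := fun z => z j with hG2'
    set G3 : (Fin d → ℝ) → ℝ := fun z => (c * c) * z j ^ 2 with hG3
    have hIF1 : Integrable F1 B := (hA2int j).const_mul _
    have hIF2 : Integrable F2 B := (hAint j).const_mul _
    have hIG2 : Integrable G2' Gm := hG1 j
    have hIG3 : Integrable G3 Gm := (hG2 j).const_mul _
    have hpt : ∀ ω : (Fin n → Fin d → ℝ) × (Fin d → ℝ), (μhat ω j - μbar j) ^ 2
        = F1 ω.1 * 1 + (F2 ω.1 * G2' ω.2 + 1 * G3 ω.2) := by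
      intro ω
      rw [hkey ω j]
      simp only [hF1, hF2, hG2', hG3]
      ring
    have hint1 : Integrable (fun ω : (Fin n → Fin d → ℝ) × (Fin d → ℝ)
        => F1 ω.1 * 1) (B.prod Gm) := hIF1.mul_prod (integrable_const 1)
    have hint2 : Integrable (fun ω : (Fin n → Fin d → ℝ) × (Fin d → ℝ)
        => F2 ω.1 * G2' ω.2) (B.prod Gm) := hIF2.mul_prod hIG2
    have hint3 : Integrable (fun ω : (Fin n → Fin d → ℝ) × (Fin d → ℝ)
        => 1 * G3 ω.2) (B.prod Gm) := (integrable_const 1).mul_prod hIG3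
    have hint23 : Integrable (fun ω : (Fin n → Fin d → ℝ) × (Fin d → ℝ)
        => F2 ω.1 * G2' ω.2 + 1 * G3 ω.2) (B.prod Gm) := hint2.add hint3
    constructor
    · exact ((hint1.add hint23).congr
        (Filter.Eventually.of_forall fun ω => (hpt ω).symm))
    · have hval1 : ∫ ω : (Fin n → Fin d → ℝ) × (Fin d → ℝ), F1 ω.1 * 1 ∂(B.prod Gm)
          = (∫ s, F1 s ∂B) * ∫ _z : Fin d → ℝ, (1:ℝ) ∂Gm :=
        integral_prod_mul (μ := B) (ν := Gm) F1 (fun _ : Fin d → ℝ => (1:ℝ))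
      have hval2 : ∫ ω : (Fin n → Fin d → ℝ) × (Fin d → ℝ), F2 ω.1 * G2' ω.2 ∂(B.prod Gm)
          = (∫ s, F2 s ∂B) * ∫ z, G2' z ∂Gm :=
        integral_prod_mul (μ := B) (ν := Gm) F2 G2'
      have hval3 : ∫ ω : (Fin n → Fin d → ℝ) × (Fin d → ℝ), 1 * G3 ω.2 ∂(B.prod Gm)
          = (∫ _s : Fin n → Fin d → ℝ, (1:ℝ) ∂B) * ∫ z, G3 z ∂Gm :=
        integral_prod_mul (μ := B) (ν := Gm) (fun _ : Fin n → Fin d → ℝ => (1:ℝ)) G3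
      have hv1 : ∫ s, F1 s ∂B = (c * c) * (γ * (1 - γ) * ∑ i, g i j ^ 2) := by
        simp only [hF1]
        rw [MeasureTheory.integral_const_mul, hA2v j]
      have hv2 : ∫ s, F2 s ∂B = 0 := by
        simp only [hF2]
        rw [MeasureTheory.integral_const_mul, hAv j, mul_zero]
      have hv3 : ∫ z, G3 z ∂Gm = (c * c) * σ ^ 2 := by
        simp only [hG3]
        rw [MeasureTheory.integral_const_mul, hG2v j]
      have hvG2 : ∫ z, G2' z ∂Gm = 0 := hG1v j
      rw [integral_congr_ae (Filter.Eventually.of_forall hpt),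
        integral_add hint1 hint23, integral_add hint2 hint3,
        hval1, hval2, hval3, hv1, hv2, hv3, hvG2]
      simp only [integral_const, measure_univ, probReal_univ, ENNReal.toReal_one, smul_eq_mul, one_mul,
        mul_one, mul_zero, zero_mul, zero_add, add_zero]
  have part2 : ∫ ω, ∑ j, (μhat ω j - μbar j) ^ 2 ∂P
      = d * σ ^ 2 / (n ^ 2 * γ ^ 2) + ((1 - γ) / (n ^ 2 * γ)) * ∑ i, ∑ j, g i j ^ 2 := by
    rw [hP]
    rw [integral_finset_sum _ (fun j _ => (hPj j).1)]
    rw [Finset.sum_congr rfl (fun j _ => (hPj j).2)]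
    have h1 : ∑ j : Fin d, (c * c * (γ * (1 - γ) * ∑ i, g i j ^ 2) + c * c * σ ^ 2)
        = (∑ j : Fin d, c * c * (γ * (1 - γ) * ∑ i, g i j ^ 2)) + (d : ℝ) * (c * c * σ ^ 2) := by
      rw [Finset.sum_add_distrib, Finset.sum_const, Finset.card_univ, Fintype.card_fin,
        nsmul_eq_mul]
    have h2 : ∑ j : Fin d, c * c * (γ * (1 - γ) * ∑ i, g i j ^ 2)
        = (c * c * (γ * (1 - γ))) * ∑ i, ∑ j, g i j ^ 2 := by
      calc ∑ j : Fin d, c * c * (γ * (1 - γ) * ∑ i, g i j ^ 2)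
          = ∑ j : Fin d, (c * c * (γ * (1 - γ))) * ∑ i, g i j ^ 2 :=
            Finset.sum_congr rfl fun j _ => by ring
        _ = (c * c * (γ * (1 - γ))) * ∑ j : Fin d, ∑ i, g i j ^ 2 := by
            rw [Finset.mul_sum]
        _ = (c * c * (γ * (1 - γ))) * ∑ i, ∑ j, g i j ^ 2 := by
            rw [Finset.sum_comm]
    rw [h1, h2, hc]
    field_simp
    ring
  exact ⟨part1, part2⟩
end

section
/- Let μ, ν, ρ be probability measures on ℝ^d and let α > 1. Then the Rényi divergence of order α is non-increasing under convolution with a common measure: D_α( μ ∗ ρ ‖ ν ∗ ρ ) ≤ D_α( μ ‖ ν ), where ∗ denotes the convolution of measures on the additive group ℝ^d. -/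
open MeasureTheory ProbabilityTheory Real
open scoped ENNReal NNReal Classical

/-- Convolution of two measures on `ℝ^d`: the pushforward of the product measure
under addition. -/
noncomputable def mconvAdd {d : ℕ} (μ ρ : Measure (Fin d → ℝ)) : Measure (Fin d → ℝ) :=
  (μ.prod ρ).map (fun p => p.1 + p.2)

section Aux

variable {β γ : Type*} [MeasurableSpace β] [MeasurableSpace γ]

/-- Data processing inequality for the α-power integral under a pushforward map. -/
lemma lintegral_rpow_rnDeriv_map_le
    (P Q : Measure β) [IsProbabilityMeasure P] [IsProbabilityMeasure Q]
    {T : β → γ} (hT : Measurable T) (hPQ : P ≪ Q) {α : ℝ} (hα : 1 < α) :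
    ∫⁻ z, ((P.map T).rnDeriv (Q.map T) z) ^ α ∂(Q.map T)
      ≤ ∫⁻ x, (P.rnDeriv Q x) ^ α ∂Q := by
  have hα0 : (0:ℝ) < α := lt_trans one_pos hα
  set f : β → ℝ≥0∞ := P.rnDeriv Q with hf_def
  have hf : Measurable f := Measure.measurable_rnDeriv _ _
  set g : γ → ℝ≥0∞ := (P.map T).rnDeriv (Q.map T) with hg_def
  have hg : Measurable g := Measure.measurable_rnDeriv _ _
  have hmapac : P.map T ≪ Q.map T := hPQ.map hT
  have hPT : (Q.map T).withDensity g = P.map T :=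
    Measure.withDensity_rnDeriv_eq _ _ hmapac
  have hP : Q.withDensity f = P := Measure.withDensity_rnDeriv_eq _ _ hPQ
  set J : ℝ≥0∞ := ∫⁻ x, f x ^ α ∂Q with hJ_def
  by_cases hJtop : J = ∞
  · rw [hJtop]; exact le_top
  -- truncations
  set G : ℕ → γ → ℝ≥0∞ := fun n z => min (g z) n with hG_def
  have hGmeas : ∀ n, Measurable (G n) := fun n => hg.min measurable_const
  set I : ℕ → ℝ≥0∞ := fun n => ∫⁻ z, (G n z) ^ α ∂(Q.map T) with hI_def
  -- each I n ≤ J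
  have key : ∀ n, I n ≤ J := by
    intro n
    have hIn_le : I n ≤ (n:ℝ≥0∞) ^ α := by
      have : IsProbabilityMeasure (Q.map T) := Measure.isProbabilityMeasure_map hT.aemeasurable
      calc I n ≤ ∫⁻ _, (n:ℝ≥0∞) ^ α ∂(Q.map T) := by
            refine lintegral_mono fun z => ?_
            exact ENNReal.rpow_le_rpow (min_le_right _ _) hα0.le
        _ = (n:ℝ≥0∞) ^ α := by
            rw [lintegral_const, measure_univ, mul_one]
    have hIn_ne_top : I n ≠ ∞ :=
      ne_top_of_le_ne_top (ENNReal.rpow_ne_top_of_nonneg hα0.le (by simp)) hIn_le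
    by_cases hIn0 : I n = 0
    · rw [hIn0]; exact zero_le
    -- Step 1: I n ≤ ∫ (G n)^(α-1) dP.map T
    have step1 : I n ≤ ∫⁻ z, (G n z) ^ (α - 1) * g z ∂(Q.map T) := by
      refine lintegral_mono fun z => ?_
      by_cases h0 : G n z = 0
      · rw [h0, ENNReal.zero_rpow_of_pos hα0]; exact zero_le
      · have hne : G n z ≠ ∞ :=
          ne_top_of_le_ne_top (by simp) (min_le_right _ _)
        calc (G n z) ^ α = (G n z) ^ (α - 1) * (G n z) ^ (1:ℝ) := by
              rw [← ENNReal.rpow_add _ _ h0 hne]; ring_nf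
          _ = (G n z) ^ (α - 1) * G n z := by rw [ENNReal.rpow_one]
          _ ≤ (G n z) ^ (α - 1) * g z :=
              mul_le_mul_right (min_le_left _ _) _
    have hmeasG : Measurable fun z => G n z ^ (α - 1) := (hGmeas n).pow_const _
    have hmeasGT : Measurable fun x => G n (T x) ^ (α - 1) :=
      ((hGmeas n).comp hT).pow_const _
    have step2 : ∫⁻ z, (G n z) ^ (α - 1) * g z ∂(Q.map T)
        = ∫⁻ x, (G n (T x)) ^ (α - 1) ∂P := by
      have e1 : ∫⁻ z, (G n z) ^ (α - 1) * g z ∂(Q.map T)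
          = ∫⁻ z, (G n z) ^ (α - 1) ∂(P.map T) := by
        rw [← hPT, lintegral_withDensity_eq_lintegral_mul _ hg hmeasG]
        refine lintegral_congr fun z => ?_
        simp [mul_comm]
      rw [e1, lintegral_map hmeasG hT]
    have step3 : ∫⁻ x, (G n (T x)) ^ (α - 1) ∂P
        = ∫⁻ x, (G n (T x)) ^ (α - 1) * f x ∂Q := by
      rw [← hP, lintegral_withDensity_eq_lintegral_mul _ hf hmeasGT]
      refine lintegral_congr fun x => ?_
      simp [mul_comm]
    -- Hölder with p = α/(α-1), q = α
    have hα1 : (0:ℝ) < α - 1 := by linarith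
    have hpq : (α/(α-1)).HolderConjugate α := by
      rw [Real.holderConjugate_iff]
      constructor
      · rw [lt_div_iff₀ hα1]; linarith
      · field_simp; ring
    have hexp : ∀ x, ((G n (T x)) ^ (α - 1)) ^ (α/(α-1)) = (G n (T x)) ^ α := by
      intro x
      rw [← ENNReal.rpow_mul]
      congr 1
      field_simp
    have hIeq : ∫⁻ a, ((G n (T a)) ^ (α - 1)) ^ (α/(α-1)) ∂Q = I n := by
      rw [lintegral_congr hexp]
      exact (lintegral_map ((hGmeas n).pow_const α) hT).symm
    have holder : ∫⁻ x, (G n (T x)) ^ (α - 1) * f x ∂Q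
        ≤ (I n) ^ (1/(α/(α-1))) * J ^ (1/α) := by
      have h := ENNReal.lintegral_mul_le_Lp_mul_Lq Q hpq
        hmeasGT.aemeasurable hf.aemeasurable
      simp only [Pi.mul_apply] at h
      rw [hIeq, ← hJ_def] at h
      exact h
    have hcollapse : I n = (I n) ^ (1/(α/(α-1))) * (I n) ^ (1/α) := by
      rw [← ENNReal.rpow_add _ _ hIn0 hIn_ne_top, one_div, one_div,
        hpq.inv_add_inv_eq_one, ENNReal.rpow_one]
    have hmain : (I n) ^ (1/(α/(α-1))) * (I n) ^ (1/α)
        ≤ (I n) ^ (1/(α/(α-1))) * J ^ (1/α) := by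
      rw [← hcollapse]
      exact le_trans step1 (le_trans (le_of_eq step2)
        (le_trans (le_of_eq step3) holder))
    have hpow_ne0 : (I n) ^ (1/(α/(α-1))) ≠ 0 := by
      simp only [ne_eq, ENNReal.rpow_eq_zero_iff, not_or]
      constructor
      · rintro ⟨h, -⟩; exact hIn0 h
      · rintro ⟨h, -⟩; exact hIn_ne_top h
    have hpow_ne_top : (I n) ^ (1/(α/(α-1))) ≠ ∞ := by
      refine ENNReal.rpow_ne_top_of_nonneg ?_ hIn_ne_top
      positivity
    have hle : (I n) ^ (1/α) ≤ J ^ (1/α) :=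
      (ENNReal.mul_le_mul_iff_right hpow_ne0 hpow_ne_top).mp hmain
    have := ENNReal.rpow_le_rpow hle hα0.le
    rwa [← ENNReal.rpow_mul, ← ENNReal.rpow_mul, one_div,
      inv_mul_cancel₀ hα0.ne', ENNReal.rpow_one, ENNReal.rpow_one] at this
  -- monotone convergence
  have hmono : Monotone fun n z => (G n z) ^ α := by
    intro m n hmn
    refine fun z => ENNReal.rpow_le_rpow ?_ hα0.le
    exact min_le_min le_rfl (by exact_mod_cast Nat.cast_le.mpr hmn)
  have hsup : ∀ z, (⨆ n, (G n z) ^ α) = g z ^ α := by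
    intro z
    by_cases hz : g z = ∞
    · rw [hz, ENNReal.top_rpow_of_pos hα0]
      rw [← top_le_iff]
      have h1 : (⊤:ℝ≥0∞) = ⨆ n : ℕ, (n:ℝ≥0∞) := ENNReal.iSup_natCast.symm
      rw [h1]
      refine iSup_mono fun n => ?_
      have : G n z = (n:ℝ≥0∞) := by simp [hG_def, hz]
      rw [this]
      rcases Nat.eq_zero_or_pos n with h | h
      · simp [h]
      · have hn1 : (1:ℝ≥0∞) ≤ (n:ℝ≥0∞) := by exact_mod_cast h
        calc (n:ℝ≥0∞) = (n:ℝ≥0∞) ^ (1:ℝ) := (ENNReal.rpow_one _).symm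
          _ ≤ (n:ℝ≥0∞) ^ α := ENNReal.rpow_le_rpow_of_exponent_le hn1 hα.le
    · refine le_antisymm (iSup_le fun n => ?_) ?_
      · exact ENNReal.rpow_le_rpow (min_le_left _ _) hα0.le
      · obtain ⟨n, hn⟩ := ENNReal.exists_nat_gt hz
        refine le_trans (le_of_eq ?_) (le_iSup _ n)
        congr 1
        simp [hG_def, min_eq_left hn.le]
  calc ∫⁻ z, g z ^ α ∂(Q.map T) = ⨆ n, I n := by
        rw [hI_def, ← lintegral_iSup (fun n => (hGmeas n).pow_const _) hmono]
        exact lintegral_congr fun z => (hsup z).symm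
    _ ≤ J := iSup_le key

/-- Tensorization: the α-power integral of the Radon–Nikodym derivative for product
measures with a common second factor equals that of the first factors. -/
lemma lintegral_rpow_rnDeriv_prod {E F : Type*} [MeasurableSpace E] [MeasurableSpace F]
    (μ ν : Measure E) (ρ : Measure F)
    [IsProbabilityMeasure μ] [IsProbabilityMeasure ν] [IsProbabilityMeasure ρ]
    (hμν : μ ≪ ν) (α : ℝ) :
    ∫⁻ p, ((μ.prod ρ).rnDeriv (ν.prod ρ) p) ^ α ∂(ν.prod ρ)
      = ∫⁻ x, (μ.rnDeriv ν x) ^ α ∂ν := by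
  set f : E → ℝ≥0∞ := μ.rnDeriv ν with hf_def
  have hf : Measurable f := Measure.measurable_rnDeriv _ _
  have hμ : ν.withDensity f = μ := Measure.withDensity_rnDeriv_eq _ _ hμν
  have hffst : Measurable fun p : E × F => f p.1 := hf.comp measurable_fst
  have hprod : μ.prod ρ = (ν.prod ρ).withDensity (fun p => f p.1) := by
    refine Measure.prod_eq fun s t hs ht => ?_
    rw [withDensity_apply _ (hs.prod ht), ← Measure.prod_restrict]
    rw [MeasureTheory.lintegral_prod _ hffst.aemeasurable]
    simp only [lintegral_const, Measure.restrict_apply_univ]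
    rw [lintegral_mul_const _ hf, ← withDensity_apply _ hs, hμ]
  have hae : (fun p : E × F => f p.1) =ᵐ[ν.prod ρ] (μ.prod ρ).rnDeriv (ν.prod ρ) := by
    refine Measure.eq_rnDeriv (μ := μ.prod ρ) (ν := ν.prod ρ) hffst
      Measure.MutuallySingular.zero_left ?_
    rw [zero_add]
    exact hprod
  have h1 : ∫⁻ p, ((μ.prod ρ).rnDeriv (ν.prod ρ) p) ^ α ∂(ν.prod ρ)
      = ∫⁻ p : E × F, (f p.1) ^ α ∂(ν.prod ρ) := by
    refine lintegral_congr_ae ?_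
    filter_upwards [hae] with p hp
    rw [hp]
  rw [h1, MeasureTheory.lintegral_prod _ (hffst.pow_const α).aemeasurable]
  simp

end Aux

theorem renyiDiv_conv_le
    (d : ℕ) (μ ν ρ : Measure (Fin d → ℝ))
    [IsProbabilityMeasure μ] [IsProbabilityMeasure ν] [IsProbabilityMeasure ρ]
    (α : ℝ) (hα : 1 < α) :
    renyiDiv α (mconvAdd μ ρ) (mconvAdd ν ρ) ≤ renyiDiv α μ ν := by
  by_cases hac : μ ≪ ν
  · have hT : Measurable fun p : (Fin d → ℝ) × (Fin d → ℝ) => p.1 + p.2 :=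
      measurable_fst.add measurable_snd
    have hprodac : μ.prod ρ ≪ ν.prod ρ :=
      hac.prod Measure.AbsolutelyContinuous.rfl
    have hconv : mconvAdd μ ρ ≪ mconvAdd ν ρ := hprodac.map hT
    rw [renyiDiv, renyiDiv, if_pos hac, if_pos hconv]
    have hcoef : (0:EReal) ≤ (((α - 1)⁻¹ : ℝ) : EReal) := by
      rw [← EReal.coe_zero, EReal.coe_le_coe_iff]
      exact le_of_lt (inv_pos.mpr (by linarith))
    refine mul_le_mul_of_nonneg_left ?_ hcoef
    refine ENNReal.log_monotone ?_
    calc ∫⁻ x, ((mconvAdd μ ρ).rnDeriv (mconvAdd ν ρ) x) ^ α ∂(mconvAdd ν ρ)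
        ≤ ∫⁻ p, ((μ.prod ρ).rnDeriv (ν.prod ρ) p) ^ α ∂(ν.prod ρ) :=
          lintegral_rpow_rnDeriv_map_le (μ.prod ρ) (ν.prod ρ) hT hprodac hα
      _ = ∫⁻ x, (μ.rnDeriv ν x) ^ α ∂ν :=
          lintegral_rpow_rnDeriv_prod μ ν ρ hac α
  · simp only [renyiDiv]
    rw [if_neg hac]
    exact le_top
end
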